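/- arXiv:2010.04287 — 2 statements merged into one kernel-verified Lean document; each statement's English description precedes it below -/
import Mathlib

section
/- Let b, T > 0, let φ : [-b,0] → ℝ be a bounded measurable function with φ(0) > 0, let f : ℝ → ℝ be bounded measurable, let J ⊆ ℝ, and let g : J × ℝ → ℝ be bounded measurable such that for some constant α₀ > -1 one has g(z,x) ≥ α₀ for all z ∈ J and x ∈ ℝ. Fix jump times 0 < τ₁ < … < τ_m ≤ T and marks z₁, …, z_m ∈ J, and let S : [-b,T] → ℝ be the unique function with S = φ on [-b,0], having left limits at each τᵢ, and satisfying S(t) = φ(0) + ∫₀ᵗ f(S(u−b)) S(u) du + ∑_{i : τᵢ ≤ t} g(zᵢ, S(τᵢ−b)) · S(τᵢ−) for all t ∈ [0,T]. Then S admits the exponential representation S(t) = φ(0) · exp( ∫₀ᵗ f(S(u−b)) du + ∑_{i : τᵢ ≤ t} ln(1 + g(zᵢ, S(τᵢ−b))) ) for every t ∈ [0,T]. -/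
open MeasureTheory Filter Set

/-- Bounded measurable functions are interval integrable. -/
lemma aux_intervalIntegrable_of_bounded {f : ℝ → ℝ} (hm : Measurable f) {C : ℝ}
    (hb : ∀ x, |f x| ≤ C) (a b : ℝ) : IntervalIntegrable f volume a b := by
  rw [intervalIntegrable_iff]
  exact Measure.integrableOn_of_bounded measure_Ioc_lt_top.ne hm.aestronglyMeasurable
    (ae_of_all _ hb)

/-- The interval integral is bounded by the total integral of the absolute value. -/
lemma aux_abs_intervalIntegral_le {f : ℝ → ℝ} (hf : Integrable f) (a t : ℝ) :
    |∫ u in a..t, f u| ≤ ∫ u, |f u| := by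
  have h1 : ‖∫ u in a..t, f u‖ ≤ ∫ u in Set.uIoc a t, ‖f u‖ :=
    intervalIntegral.norm_integral_le_integral_norm_uIoc
  simp only [Real.norm_eq_abs] at h1
  exact h1.trans (setIntegral_le_integral hf.abs (ae_of_all _ fun u => abs_nonneg _))

/-- Interval integral of a bounded function bound. -/
lemma aux_abs_intervalIntegral_le' {f : ℝ → ℝ} (hm : Measurable f) {C : ℝ}
    (hb : ∀ x, |f x| ≤ C) {a t : ℝ} (h : a ≤ t) :
    |∫ u in a..t, f u| ≤ C * (t - a) := by
  have h1 : ‖∫ u in a..t, f u‖ ≤ ∫ u in Set.uIoc a t, ‖f u‖ :=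
    intervalIntegral.norm_integral_le_integral_norm_uIoc
  simp only [Real.norm_eq_abs] at h1
  have h2 : Set.uIoc a t = Set.Ioc a t := Set.uIoc_of_le h
  have h3 : ∫ u in Set.Ioc a t, |f u| ≤ ∫ u in Set.Ioc a t, C := by
    apply setIntegral_mono_on
    · have : IntervalIntegrable f volume a t := aux_intervalIntegrable_of_bounded hm hb a t
      rw [intervalIntegrable_iff, h2] at this
      exact this.abs
    · exact integrableOn_const measure_Ioc_lt_top.ne
    · exact measurableSet_Ioc
    · exact fun x _ => hb x
  have h4 : ∫ u in Set.Ioc a t, (C : ℝ) = C * (t - a) := by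
    simp [Real.volume_Ioc, ENNReal.toReal_ofReal (sub_nonneg.2 h)]; rw [max_eq_left (sub_nonneg.2 h)]; ring
  rw [h2] at h1; linarith

lemma aux_exp_sub_exp {x y B : ℝ} (hx : |x| ≤ B) (hy : |y| ≤ B) :
    |Real.exp x - Real.exp y| ≤ Real.exp B * |x - y| := by
  wlog hxy : y ≤ x generalizing x y
  · rw [abs_sub_comm, abs_sub_comm x y]; exact this hy hx (le_of_not_ge hxy)
  have e1 : Real.exp (y - x) * Real.exp (x - y) = 1 := by rw [← Real.exp_add]; simp
  have h2 : Real.exp (x - y) - 1 ≤ (x - y) * Real.exp (x - y) := by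
    nlinarith [Real.add_one_le_exp (y - x), Real.exp_pos (x - y)]
  have h3 : Real.exp x - Real.exp y = Real.exp y * (Real.exp (x - y) - 1) := by
    rw [mul_sub, ← Real.exp_add]; ring_nf
  have h4 : Real.exp y * ((x - y) * Real.exp (x - y)) = (x - y) * Real.exp x := by
    rw [show Real.exp x = Real.exp y * Real.exp (x - y) by rw [← Real.exp_add]; ring_nf]
    ring
  have h5 : Real.exp x ≤ Real.exp B := Real.exp_le_exp.2 ((le_abs_self x).trans hx)
  have h1 : Real.exp x - Real.exp y ≤ Real.exp B * (x - y) := by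
    nlinarith [Real.exp_pos y, sub_nonneg.2 hxy]
  rw [abs_of_nonneg (sub_nonneg.2 (Real.exp_le_exp.2 hxy)), abs_of_nonneg (sub_nonneg.2 hxy)]
  exact h1

lemma aux_expFTC_cont {h : ℝ → ℝ} (hc : Continuous h) (hi : Integrable h) (a t : ℝ) :
    ∫ u in a..t, h u * Real.exp (∫ v in a..u, h v)
      = Real.exp (∫ v in a..t, h v) - 1 := by
  have hint : ∀ x y : ℝ, IntervalIntegrable h volume x y := fun _ _ => hi.intervalIntegrable
  have Hcont : Continuous fun x => ∫ v in a..x, h v :=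
    intervalIntegral.continuous_primitive hint a
  have key : ∀ u : ℝ, HasDerivAt (fun x => Real.exp (∫ v in a..x, h v))
      (h u * Real.exp (∫ v in a..u, h v)) u := by
    intro u
    have hd : HasDerivAt (fun x => ∫ v in a..x, h v) (h u) u :=
      intervalIntegral.integral_hasDerivAt_right (hint a u)
        hc.stronglyMeasurable.stronglyMeasurableAtFilter hc.continuousAt
    simpa [mul_comm] using hd.exp
  have conti : Continuous fun u => h u * Real.exp (∫ v in a..u, h v) :=
    hc.mul (Real.continuous_exp.comp Hcont)
  have := intervalIntegral.integral_eq_sub_of_hasDerivAt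
    (f := fun x => Real.exp (∫ v in a..x, h v)) (fun x _ => key x)
    (conti.intervalIntegrable a t)
  simpa using this

/-- Exponential FTC for integrable (not necessarily continuous) integrands. -/
lemma aux_expFTC {h : ℝ → ℝ} (hi : Integrable h) (a t : ℝ) :
    ∫ u in a..t, h u * Real.exp (∫ v in a..u, h v)
      = Real.exp (∫ v in a..t, h v) - 1 := by
  have hgn : ∀ n : ℕ, ∃ g : ℝ → ℝ, (∫ x, ‖h x - g x‖) ≤ 1 / (n + 1) ∧
      Continuous g ∧ Integrable g volume := by
    intro n
    obtain ⟨g, _, h1, h2, h3⟩ := hi.exists_hasCompactSupport_integral_sub_le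
      (ε := 1 / (n + 1 : ℝ)) (by positivity)
    exact ⟨g, h1, h2, h3⟩
  choose g hg₁ hg₂ hg₃ using hgn
  set A : ℝ := ∫ u, |h u| with hA
  have hA0 : 0 ≤ A := integral_nonneg fun u => abs_nonneg _
  set B : ℝ := A + 1 with hB
  set H : ℝ → ℝ := fun x => ∫ v in a..x, h v with hH
  set G : ℕ → ℝ → ℝ := fun n x => ∫ v in a..x, g n v with hG
  have hgh : ∀ n, ∫ u, |g n u - h u| ≤ 1 / (n + 1) := by
    intro n
    calc ∫ u, |g n u - h u| = ∫ u, ‖h u - g n u‖ := by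
          congr 1; ext u; rw [Real.norm_eq_abs, abs_sub_comm]
      _ ≤ 1 / (n + 1) := hg₁ n
  have hHb : ∀ x, |H x| ≤ A := fun x => aux_abs_intervalIntegral_le hi a x
  have hGH : ∀ n x, |G n x - H x| ≤ 1 / (n + 1) := by
    intro n x
    have heq : G n x - H x = ∫ v in a..x, (g n v - h v) := by
      rw [intervalIntegral.integral_sub (hg₃ n).intervalIntegrable hi.intervalIntegrable]
    rw [heq]
    exact (aux_abs_intervalIntegral_le ((hg₃ n).sub hi) a x).trans (hgh n)
  have hn1 : ∀ n : ℕ, (1:ℝ) / (n+1) ≤ 1 := by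
    intro n; rw [div_le_one (by positivity)]; linarith [Nat.cast_nonneg (α := ℝ) n]
  have hGb : ∀ n x, |G n x| ≤ B := by
    intro n x
    have h1 := hGH n x
    have h2 := hHb x
    calc |G n x| = |(G n x - H x) + H x| := by ring_nf
      _ ≤ |G n x - H x| + |H x| := abs_add_le _ _
      _ ≤ B := by rw [hB]; linarith [hn1 n]
  have hHB : ∀ x, |H x| ≤ B := fun x => (hHb x).trans (by rw [hB]; linarith)
  have hHcont : Continuous H := intervalIntegral.continuous_primitive
    (fun _ _ => hi.intervalIntegrable) a
  have hGcont : ∀ n, Continuous (G n) := fun n =>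
    intervalIntegral.continuous_primitive (fun _ _ => (hg₃ n).intervalIntegrable) a
  have hintH : Integrable (fun u => h u * Real.exp (H u)) volume := by
    have := Integrable.bdd_mul hi (Real.continuous_exp.comp hHcont).aestronglyMeasurable
      (c := Real.exp B) (ae_of_all _ fun x => by
        simp only [Function.comp_apply, Real.norm_eq_abs, abs_of_pos (Real.exp_pos _)]
        exact Real.exp_le_exp.2 ((le_abs_self _).trans (hHB x)))
    exact this.congr (ae_of_all _ fun x => mul_comm _ _)
  have hintG : ∀ n, Integrable (fun u => g n u * Real.exp (G n u)) volume := by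
    intro n
    have := Integrable.bdd_mul (hg₃ n)
      (Real.continuous_exp.comp (hGcont n)).aestronglyMeasurable
      (c := Real.exp B) (ae_of_all _ fun x => by
        simp only [Function.comp_apply, Real.norm_eq_abs, abs_of_pos (Real.exp_pos _)]
        exact Real.exp_le_exp.2 ((le_abs_self _).trans (hGb n x)))
    exact this.congr (ae_of_all _ fun x => mul_comm _ _)
  -- the approximate identity
  have hid : ∀ n, ∫ u in a..t, g n u * Real.exp (G n u) = Real.exp (G n t) - 1 :=
    fun n => aux_expFTC_cont (hg₂ n) (hg₃ n) a t
  -- limit of RHS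
  have hRHS : Tendsto (fun n => Real.exp (G n t) - 1) atTop (nhds (Real.exp (H t) - 1)) := by
    have h1 : Tendsto (fun n => G n t) atTop (nhds (H t)) := by
      rw [tendsto_iff_dist_tendsto_zero]
      exact squeeze_zero (fun n => dist_nonneg)
        (fun n => (Real.dist_eq _ _).trans_le (hGH n t))
        tendsto_one_div_add_atTop_nhds_zero_nat
    exact ((Real.continuous_exp.tendsto _).comp h1).sub_const 1
  -- limit of LHS
  have hLHS : Tendsto (fun n => ∫ u in a..t, g n u * Real.exp (G n u)) atTop
      (nhds (∫ u in a..t, h u * Real.exp (H u))) := by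
    rw [tendsto_iff_dist_tendsto_zero]
    have hten : Tendsto (fun n : ℕ => Real.exp B * (1 + A) * (1 / (n + 1 : ℝ))) atTop
        (nhds (Real.exp B * (1 + A) * 0)) :=
      tendsto_one_div_add_atTop_nhds_zero_nat.const_mul _
    rw [mul_zero] at hten
    refine squeeze_zero (fun n => dist_nonneg) (fun n => ?_) hten
    · rw [Real.dist_eq]
      have hsub : (∫ u in a..t, g n u * Real.exp (G n u)) - (∫ u in a..t, h u * Real.exp (H u))
          = ∫ u in a..t, (g n u * Real.exp (G n u) - h u * Real.exp (H u)) := by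
        rw [intervalIntegral.integral_sub (hintG n).intervalIntegrable hintH.intervalIntegrable]
      rw [hsub]
      have iD : Integrable (fun u => g n u * Real.exp (G n u) - h u * Real.exp (H u)) volume :=
        (hintG n).sub hintH
      have h1 := aux_abs_intervalIntegral_le iD a t
      refine h1.trans ?_
      have hptw : ∀ u, |g n u * Real.exp (G n u) - h u * Real.exp (H u)| ≤
          Real.exp B * |g n u - h u| + Real.exp B * (1 / (n+1)) * |h u| := by
        intro u
        have e1 : g n u * Real.exp (G n u) - h u * Real.exp (H u)
            = (g n u - h u) * Real.exp (G n u) + h u * (Real.exp (G n u) - Real.exp (H u)) := by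
          ring
        rw [e1]
        have e2 : |(g n u - h u) * Real.exp (G n u)| ≤ Real.exp B * |g n u - h u| := by
          rw [abs_mul, abs_of_pos (Real.exp_pos _), mul_comm]
          exact mul_le_mul_of_nonneg_right
            (Real.exp_le_exp.2 ((le_abs_self _).trans (hGb n u))) (abs_nonneg _)
        have e3 : |h u * (Real.exp (G n u) - Real.exp (H u))| ≤
            Real.exp B * (1 / (n+1)) * |h u| := by
          rw [abs_mul]
          have := aux_exp_sub_exp (hGb n u) (hHB u)
          calc |h u| * |Real.exp (G n u) - Real.exp (H u)|
              ≤ |h u| * (Real.exp B * |G n u - H u|) :=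
                mul_le_mul_of_nonneg_left this (abs_nonneg _)
            _ ≤ |h u| * (Real.exp B * (1 / (n+1))) :=
                mul_le_mul_of_nonneg_left
                  (mul_le_mul_of_nonneg_left (hGH n u) (Real.exp_pos B).le) (abs_nonneg _)
            _ = Real.exp B * (1/(n+1)) * |h u| := by ring
        exact (abs_add_le _ _).trans (by linarith)
      have idiff : Integrable (fun u => g n u - h u) volume := (hg₃ n).sub hi
      have i1 : Integrable (fun u => Real.exp B * |g n u - h u|) volume :=
        idiff.abs.const_mul _
      have i2 : Integrable (fun u => Real.exp B * (1/(n+1)) * |h u|) volume :=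
        hi.abs.const_mul _
      have hint1 : Integrable (fun u => Real.exp B * |g n u - h u|
          + Real.exp B * (1/(n+1)) * |h u|) volume := i1.add i2
      have h2 : ∫ u, |g n u * Real.exp (G n u) - h u * Real.exp (H u)|
          ≤ ∫ u, (Real.exp B * |g n u - h u| + Real.exp B * (1/(n+1)) * |h u|) :=
        integral_mono iD.abs hint1 hptw
      refine h2.trans ?_
      rw [integral_add i1 i2, integral_const_mul, integral_const_mul]
      have h3 : ∫ u, |g n u - h u| ≤ 1/(n+1) := hgh n
      have h4 : (∫ u, |h u|) = A := rfl
      rw [h4]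
      have hE := (Real.exp_pos B).le
      have h5 : Real.exp B * ∫ u, |g n u - h u| ≤ Real.exp B * (1/(n+1)) :=
        mul_le_mul_of_nonneg_left h3 hE
      have h6 : Real.exp B * (1/(n+1)) + Real.exp B * (1/(n+1)) * A
          = Real.exp B * (1 + A) * (1/(n+1)) := by ring
      linarith
  -- combine
  have := hLHS
  rw [funext hid] at this
  exact tendsto_nhds_unique this hRHS

/-- Solutions of a linear integral equation with bounded measurable coefficient are
exponentials. -/
lemma aux_linODE {C a d : ℝ} (had : a ≤ d) {h y : ℝ → ℝ} (hhm : Measurable h)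
    (hym : Measurable y) (hC : ∀ u, |h u| ≤ C)
    (hint : IntegrableOn (fun u => h u * y u) (Set.Ioc a d))
    (heq : ∀ t ∈ Set.Icc a d, y t = y a + ∫ u in a..t, h u * y u) :
    ∀ t ∈ Set.Icc a d, y t = y a * Real.exp (∫ u in a..t, h u) := by
  have hC0 : 0 ≤ C := (abs_nonneg _).trans (hC 0)
  set ψ : ℝ → ℝ := fun u => h u * y u with hψ
  have hψm : Measurable ψ := hhm.mul hym
  -- boundedness of y on [a,d]
  set Mψ : ℝ := ∫ u in Set.Ioc a d, |ψ u| with hMψ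
  have hIψt : ∀ t ∈ Set.Icc a d, IntegrableOn ψ (Set.Ioc a t) :=
    fun t ht => hint.mono_set (Set.Ioc_subset_Ioc le_rfl ht.2)
  have hyb : ∀ t ∈ Set.Icc a d, |y t| ≤ |y a| + Mψ := by
    intro t ht
    rw [heq t ht]
    have h1 : ‖∫ u in a..t, ψ u‖ ≤ ∫ u in Set.uIoc a t, ‖ψ u‖ :=
      intervalIntegral.norm_integral_le_integral_norm_uIoc
    simp only [Real.norm_eq_abs] at h1
    rw [Set.uIoc_of_le ht.1] at h1
    have h2 : ∫ u in Set.Ioc a t, |ψ u| ≤ Mψ := by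
      apply setIntegral_mono_set hint.abs (ae_of_all _ fun u => abs_nonneg _)
      exact HasSubset.Subset.eventuallyLE (Set.Ioc_subset_Ioc le_rfl ht.2)
    calc |y a + ∫ u in a..t, ψ u| ≤ |y a| + |∫ u in a..t, ψ u| := abs_add_le _ _
      _ ≤ |y a| + Mψ := by linarith
  -- the truncated coefficient
  set h' : ℝ → ℝ := (Set.Ioc a d).indicator h with hh'
  have hh'm : Measurable h' := hhm.indicator measurableSet_Ioc
  have hh'b : ∀ u, |h' u| ≤ C := by
    intro u
    by_cases hu : u ∈ Set.Ioc a d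
    · rw [hh', Set.indicator_of_mem hu]; exact hC u
    · rw [hh', Set.indicator_of_notMem hu]; simpa using hC0
  have hIh' : Integrable h' volume := by
    apply (Measure.integrableOn_of_bounded (M := C) measure_Ioc_lt_top.ne
      hhm.aestronglyMeasurable (ae_of_all _ hC)).integrable_indicator measurableSet_Ioc
  set H : ℝ → ℝ := fun t => ∫ v in a..t, h' v with hHdef
  have hHcont : Continuous H := intervalIntegral.continuous_primitive
    (fun _ _ => hIh'.intervalIntegrable) a
  have hHeq : ∀ t ∈ Set.Icc a d, H t = ∫ u in a..t, h u := by
    intro t ht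
    rw [hHdef]
    simp only
    rw [intervalIntegral.integral_of_le ht.1, intervalIntegral.integral_of_le ht.1]
    apply setIntegral_congr_fun measurableSet_Ioc
    intro u hu
    exact Set.indicator_of_mem (Set.Ioc_subset_Ioc le_rfl ht.2 hu) h
  have hHb : ∀ t, |H t| ≤ C * (d - a) := by
    intro t
    have h1 := aux_abs_intervalIntegral_le hIh' a t
    refine h1.trans ?_
    have h2 : ∫ u, |h' u| = ∫ u in Set.Ioc a d, |h u| := by
      rw [← integral_indicator measurableSet_Ioc]
      congr 1; ext u
      by_cases hu : u ∈ Set.Ioc a d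
      · rw [hh', Set.indicator_of_mem hu, Set.indicator_of_mem hu]
      · rw [hh', Set.indicator_of_notMem hu, Set.indicator_of_notMem hu, abs_zero]
    rw [h2]
    have h3 : ∫ u in Set.Ioc a d, |h u| ≤ ∫ u in Set.Ioc a d, C := by
      apply setIntegral_mono_on
      · have := aux_intervalIntegrable_of_bounded hhm hC a d
        rw [intervalIntegrable_iff, Set.uIoc_of_le had] at this
        exact this.abs
      · exact integrableOn_const measure_Ioc_lt_top.ne
      · exact measurableSet_Ioc
      · exact fun x _ => hC x
    have h4 : ∫ u in Set.Ioc a d, (C : ℝ) = C * (d - a) := by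
      simp [Real.volume_Ioc, ENNReal.toReal_ofReal (sub_nonneg.2 had)]; rw [max_eq_left (sub_nonneg.2 had)]; ring
    linarith
  -- the candidate solution
  set w : ℝ → ℝ := fun t => y a * Real.exp (H t) with hwdef
  have hwcont : Continuous w := continuous_const.mul (Real.continuous_exp.comp hHcont)
  have hwb : ∀ t, |w t| ≤ |y a| * Real.exp (C * (d - a)) := by
    intro t
    rw [hwdef]
    simp only [abs_mul, abs_of_pos (Real.exp_pos _)]
    exact mul_le_mul_of_nonneg_left
      (Real.exp_le_exp.2 ((le_abs_self _).trans (hHb t))) (abs_nonneg _)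
  have hweq : ∀ t, w t = y a + ∫ u in a..t, h' u * w u := by
    intro t
    have h1 := aux_expFTC hIh' a t
    have h2 : ∫ u in a..t, h' u * w u = y a * (Real.exp (H t) - 1) := by
      rw [← h1, ← intervalIntegral.integral_const_mul]
      congr 1; ext u; rw [hwdef]; simp only; ring
    rw [h2, hwdef]; simp only; ring
  -- integrability of h' * w
  have hIw : Integrable (fun u => h' u * w u) volume := by
    have := hIh'.bdd_mul hwcont.aestronglyMeasurable
      (c := |y a| * Real.exp (C * (d - a))) (ae_of_all _ fun x => by
        rw [Real.norm_eq_abs]; exact hwb x)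
    exact this.congr (ae_of_all _ fun x => mul_comm _ _)
  -- the difference satisfies the iteration bound
  set δ : ℝ → ℝ := fun t => y t - w t with hδdef
  set M₂ : ℝ := |y a| + Mψ + |y a| * Real.exp (C * (d - a)) with hM₂
  have hM₂0 : 0 ≤ M₂ := by
    have := hyb a ⟨le_rfl, had⟩
    have := abs_nonneg (y a)
    have := (abs_nonneg (w a)).trans (hwb a)
    have := abs_nonneg (y a * Real.exp (C*(d-a)))
    nlinarith [abs_nonneg (y a), hwb a, abs_nonneg (w a)]
  have hδb : ∀ t ∈ Set.Icc a d, |δ t| ≤ M₂ := by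
    intro t ht
    rw [hδdef]
    calc |y t - w t| ≤ |y t| + |w t| := abs_sub _ _
      _ ≤ M₂ := by rw [hM₂]; linarith [hyb t ht, hwb t]
  -- iteration
  have hiter : ∀ n : ℕ, ∀ t ∈ Set.Icc a d, |δ t| ≤ M₂ * (C * (t - a)) ^ n / n.factorial := by
    intro n
    induction n with
    | zero => intro t ht; simpa using hδb t ht
    | succ n IH =>
      intro t ht
      have hδeq : δ t = ∫ u in a..t, (ψ u - h' u * w u) := by
        rw [hδdef]
        simp only
        rw [heq t ht, hweq t]
        rw [intervalIntegral.integral_sub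
          ((intervalIntegrable_iff_integrableOn_Ioc_of_le ht.1).2 (hIψt t ht))
          hIw.intervalIntegrable]
        ring
      rw [hδeq]
      have h1 : ‖∫ u in a..t, (ψ u - h' u * w u)‖ ≤ ∫ u in Set.uIoc a t, ‖ψ u - h' u * w u‖ :=
        intervalIntegral.norm_integral_le_integral_norm_uIoc
      simp only [Real.norm_eq_abs] at h1
      rw [Set.uIoc_of_le ht.1] at h1
      have h2 : ∫ u in Set.Ioc a t, |ψ u - h' u * w u|
          ≤ ∫ u in Set.Ioc a t, C * (M₂ * (C * (u - a)) ^ n / n.factorial) := by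
        apply setIntegral_mono_on
        · exact ((hIψt t ht).sub (hIw.integrableOn)).abs
        · have hcont : Continuous fun u : ℝ => C * (M₂ * (C * (u - a)) ^ n / n.factorial) := by
            apply continuous_const.mul
            apply Continuous.div_const
            apply continuous_const.mul
            exact (continuous_const.mul (continuous_id.sub continuous_const)).pow n
          exact (hcont.intervalIntegrable a t).1
        · exact measurableSet_Ioc
        · intro u hu
          have hu' : u ∈ Set.Icc a d := ⟨hu.1.le, hu.2.trans ht.2⟩
          have e1 : h' u = h u := Set.indicator_of_mem (Set.Ioc_subset_Ioc le_rfl ht.2 hu) h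
          have e2 : ψ u - h' u * w u = h u * δ u := by
            rw [hψ, e1, hδdef]; simp only; ring
          rw [e2, abs_mul]
          exact mul_le_mul (hC u) (IH u hu') (abs_nonneg _) hC0
      have hpoly : ∫ u in Set.Ioc a t, (u - a) ^ n = (t - a) ^ (n + 1) / (n + 1) := by
        rw [← intervalIntegral.integral_of_le ht.1]
        have e1 : ∫ u in a..t, (u - a) ^ n = ∫ x in (a - a)..(t - a), x ^ n :=
          intervalIntegral.integral_comp_sub_right (fun x => x ^ n) a
        rw [e1, sub_self, integral_pow]
        simp
      have e2 : (fun u : ℝ => C * (M₂ * (C * (u - a)) ^ n / n.factorial))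
          = fun u : ℝ => (C * M₂ * C ^ n / n.factorial) * (u - a) ^ n := by
        funext u; rw [mul_pow]; ring
      have h3 : ∫ u in Set.Ioc a t, C * (M₂ * (C * (u - a)) ^ n / n.factorial)
          = (C * M₂ * C ^ n / n.factorial) * ((t - a) ^ (n + 1) / (n + 1)) := by
        rw [e2, MeasureTheory.integral_const_mul, hpoly]
      have hfac : (((n + 1).factorial : ℝ)) = (n + 1) * n.factorial := by
        exact_mod_cast Nat.factorial_succ n
      have h4 : (C * M₂ * C ^ n / n.factorial) * ((t - a) ^ (n + 1) / (n + 1))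
          = M₂ * (C * (t - a)) ^ (n + 1) / (n + 1).factorial := by
        rw [mul_pow, hfac]
        have f1 : (n.factorial : ℝ) ≠ 0 := Nat.cast_ne_zero.2 n.factorial_ne_zero
        have f2 : ((n : ℝ) + 1) ≠ 0 := by positivity
        field_simp
        ring
      calc |∫ u in a..t, (ψ u - h' u * w u)| ≤ ∫ u in Set.Ioc a t, |ψ u - h' u * w u| := h1
        _ ≤ ∫ u in Set.Ioc a t, C * (M₂ * (C * (u - a)) ^ n / n.factorial) := h2
        _ = M₂ * (C * (t - a)) ^ (n + 1) / (n + 1).factorial := by rw [h3, h4]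
  -- conclusion
  intro t ht
  have hlim : Tendsto (fun n : ℕ => M₂ * (C * (t - a)) ^ n / n.factorial) atTop (nhds 0) := by
    have h1 := FloorSemiring.tendsto_pow_div_factorial_atTop (K := ℝ) (C * (t - a))
    have h2 := h1.const_mul M₂
    rw [mul_zero] at h2
    refine h2.congr fun n => ?_
    rw [mul_div_assoc]
  have hle : |δ t| ≤ 0 := ge_of_tendsto' hlim fun n => hiter n t ht
  have hδ0 : δ t = 0 := abs_nonpos_iff.1 hle
  have : y t = w t := by rw [hδdef] at hδ0; simp only at hδ0; linarith
  rw [this, hwdef]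
  simp only
  rw [hHeq t ht]

/-- Extension step: on a jump-free interval `[a,c]`, a solution of the integral equation
is the exponential, and the integrand is integrable up to `c`. -/
lemma aux_extend {C a c : ℝ} (ha : 0 ≤ a) (hac : a ≤ c) {h y : ℝ → ℝ} (hhm : Measurable h)
    (hym : Measurable y) (hC : ∀ u, |h u| ≤ C) {K : ℝ}
    (hK : IntegrableOn (fun u => h u * y u) (Set.Ioc 0 a))
    (heq : ∀ t ∈ Set.Icc a c, y t = K + ∫ u in (0:ℝ)..t, h u * y u) :
    IntegrableOn (fun u => h u * y u) (Set.Ioc 0 c) ∧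
      ∀ t ∈ Set.Icc a c, y t = y a * Real.exp (∫ u in a..t, h u) := by
  have hC0 : 0 ≤ C := (abs_nonneg _).trans (hC 0)
  set ψ : ℝ → ℝ := fun u => h u * y u with hψ
  have hψm : Measurable ψ := hhm.mul hym
  have claim1 : ∀ e ∈ Set.Icc a c, IntegrableOn ψ (Set.Ioc 0 e) →
      ∀ t ∈ Set.Icc a e, y t = y a * Real.exp (∫ u in a..t, h u) := by
    intro e he hPe
    have hIae : IntegrableOn ψ (Set.Ioc a e) := hPe.mono_set (Set.Ioc_subset_Ioc ha le_rfl)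
    have heq' : ∀ t ∈ Set.Icc a e, y t = y a + ∫ u in a..t, ψ u := by
      intro t ht
      have h1 := heq t ⟨ht.1, ht.2.trans he.2⟩
      have h2 := heq a ⟨le_rfl, hac⟩
      have I1 : IntervalIntegrable ψ volume 0 a :=
        (intervalIntegrable_iff_integrableOn_Ioc_of_le ha).2 hK
      have I2 : IntervalIntegrable ψ volume a t :=
        (intervalIntegrable_iff_integrableOn_Ioc_of_le ht.1).2
          (hIae.mono_set (Set.Ioc_subset_Ioc le_rfl ht.2))
      have hsplit := intervalIntegral.integral_add_adjacent_intervals I1 I2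
      rw [h1, ← hsplit, h2]
      ring
    exact aux_linODE he.1 hhm hym hC hIae heq'
  set U : Set ℝ := {t | t ∈ Set.Icc a c ∧ IntegrableOn ψ (Set.Ioc 0 t)} with hU
  have haU : a ∈ U := ⟨⟨le_rfl, hac⟩, hK⟩
  have hUbdd : BddAbove U := ⟨c, fun t ht => ht.1.2⟩
  set s : ℝ := sSup U with hs
  have has : a ≤ s := le_csSup hUbdd haU
  have hsc : s ≤ c := csSup_le ⟨a, haU⟩ fun t ht => ht.1.2
  set M₂ : ℝ := |y a| * Real.exp (C * (c - a)) with hM₂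
  have hbb : ∀ r, a ≤ r → r < s → |y r| ≤ M₂ := by
    intro r har hrs
    obtain ⟨t, htU, hrt⟩ := exists_lt_of_lt_csSup ⟨a, haU⟩ hrs
    have hform := claim1 t htU.1 htU.2 r ⟨har, hrt.le⟩
    rw [hform, abs_mul, abs_of_pos (Real.exp_pos _), hM₂]
    apply mul_le_mul_of_nonneg_left ?_ (abs_nonneg _)
    apply Real.exp_le_exp.2
    have h1 := aux_abs_intervalIntegral_le' hhm hC har
    have hrc : r ≤ c := (hrt.le.trans htU.1.2)
    have h2 : C * (r - a) ≤ C * (c - a) := mul_le_mul_of_nonneg_left (by linarith) hC0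
    calc (∫ u in a..r, h u) ≤ |∫ u in a..r, h u| := le_abs_self _
      _ ≤ C * (c - a) := h1.trans h2
  have hPs : IntegrableOn ψ (Set.Ioc 0 s) := by
    have h2 : IntegrableOn ψ (Set.Ioo a s) := by
      apply Measure.integrableOn_of_bounded (M := C * M₂) measure_Ioo_lt_top.ne
        hψm.aestronglyMeasurable
      rw [ae_restrict_iff' measurableSet_Ioo]
      apply ae_of_all
      intro u hu
      have hb := hbb u hu.1.le hu.2
      simp only [Real.norm_eq_abs, hψ, abs_mul]
      exact mul_le_mul (hC u) hb (abs_nonneg _) hC0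
    have h1 : IntegrableOn ψ (Set.Ioc a s) := by
      rwa [IntegrableOn, ← Measure.restrict_congr_set Ioo_ae_eq_Ioc] at *
    rw [show Set.Ioc 0 s = Set.Ioc 0 a ∪ Set.Ioc a s from
      (Set.Ioc_union_Ioc_eq_Ioc ha has).symm]
    exact hK.union h1
  have hyK : ∀ t, s < t → t ≤ c → y t = K := by
    intro t hst htc
    have hnP : ¬ IntegrableOn ψ (Set.Ioc 0 t) := by
      intro hP
      exact absurd (le_csSup hUbdd ⟨⟨has.trans hst.le, htc⟩, hP⟩) (not_le.2 hst)
    have h1 := heq t ⟨has.trans hst.le, htc⟩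
    rw [intervalIntegral.integral_of_le (ha.trans (has.trans hst.le)),
      MeasureTheory.integral_undef hnP] at h1
    simpa using h1
  have hPc : IntegrableOn ψ (Set.Ioc 0 c) := by
    rcases eq_or_lt_of_le hsc with hec | hlt
    · rwa [hec] at hPs
    · have h2 : IntegrableOn (fun u => h u * K) (Set.Ioc s c) :=
        Measure.integrableOn_of_bounded (M := C * |K|) measure_Ioc_lt_top.ne
          ((hhm.mul_const K).aestronglyMeasurable)
          (ae_of_all _ fun u => by
            simp only [Real.norm_eq_abs, abs_mul]
            exact mul_le_mul_of_nonneg_right (hC u) (abs_nonneg _))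
      have h1 : IntegrableOn ψ (Set.Ioc s c) := by
        apply h2.congr_fun ?_ measurableSet_Ioc
        intro u hu
        simp only [hψ]
        rw [hyK u hu.1 hu.2]
      rw [show Set.Ioc 0 c = Set.Ioc 0 s ∪ Set.Ioc s c from
        (Set.Ioc_union_Ioc_eq_Ioc (ha.trans has) hsc).symm]
      exact hPs.union h1
  exact ⟨hPc, claim1 c ⟨hac, le_rfl⟩ hPc⟩

/-- Pathwise solution of the delayed jump equation
`dS(t) = f(S(t-b)) S(t) dt + ∫_J g(z, S(t-b)) S(t-) N(dt,dz)`
on `[0,T]` with initial segment `φ` on `[-b,0]`, where the driving Poisson random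
measure has atoms at times `τ i` with marks `z i`.  `Sm i` is the left limit
`S(τ i −)`. -/
def IsPathSolution (b T : ℝ) (φ f : ℝ → ℝ) (g : ℝ → ℝ → ℝ)
    (m : ℕ) (τ z : Fin m → ℝ) (S : ℝ → ℝ) : Prop :=
  (∀ t ∈ Set.Icc (-b) (0 : ℝ), S t = φ t) ∧
  ∃ Sm : Fin m → ℝ,
    (∀ i, Filter.Tendsto S (nhdsWithin (τ i) (Set.Iio (τ i))) (nhds (Sm i))) ∧
    ∀ t ∈ Set.Icc (0 : ℝ) T,
      S t = φ 0 + (∫ u in (0 : ℝ)..t, f (S (u - b)) * S u)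
        + ∑ i ∈ Finset.univ.filter (fun i => τ i ≤ t), g (z i) (S (τ i - b)) * Sm i

/-- Exponential representation of the pathwise solution of the delayed jump equation. -/
theorem stmt_1 (b T : ℝ) (hb : 0 < b) (hT : 0 < T)
    (φ : ℝ → ℝ) (hφm : Measurable φ) (hφb : ∃ C, ∀ t ∈ Set.Icc (-b) (0 : ℝ), |φ t| ≤ C)
    (hφ0 : 0 < φ 0)
    (f : ℝ → ℝ) (hfm : Measurable f) (hfb : ∃ C, ∀ x, |f x| ≤ C)
    (J : Set ℝ) (g : ℝ → ℝ → ℝ)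
    (hgm : Measurable fun pr : ℝ × ℝ => g pr.1 pr.2)
    (hgb : ∃ C, ∀ zz x, |g zz x| ≤ C)
    (α₀ : ℝ) (hα₀ : -1 < α₀) (hg : ∀ zz ∈ J, ∀ x : ℝ, α₀ ≤ g zz x)
    (m : ℕ) (τ z : Fin m → ℝ) (hτmono : StrictMono τ)
    (hτpos : ∀ i, 0 < τ i) (hτT : ∀ i, τ i ≤ T) (hz : ∀ i, z i ∈ J)
    (S : ℝ → ℝ) (hSm : Measurable S) (hS : IsPathSolution b T φ f g m τ z S) :
    ∀ t ∈ Set.Icc (0 : ℝ) T,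
      S t = φ 0 * Real.exp ((∫ u in (0 : ℝ)..t, f (S (u - b)))
        + ∑ i ∈ Finset.univ.filter (fun i => τ i ≤ t),
            Real.log (1 + g (z i) (S (τ i - b)))) := by
  
  obtain ⟨Cf, hCf⟩ := hfb
  obtain ⟨hinit, Sm, hSmlim, heq⟩ := hS
  set h : ℝ → ℝ := fun u => f (S (u - b)) with hhdef
  have hhm : Measurable h := hfm.comp (hSm.comp (measurable_id.sub_const b))
  have hhC : ∀ u, |h u| ≤ Cf := fun u => hCf _
  have hCf0 : 0 ≤ Cf := (abs_nonneg _).trans (hCf 0)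
  set γ : Fin m → ℝ := fun i => g (z i) (S (τ i - b)) with hγdef
  have hγpos : ∀ i, 0 < 1 + γ i := fun i => by
    have := hg (z i) (hz i) (S (τ i - b))
    simp only [hγdef]
    linarith
  set L : Fin m → ℝ := fun i => Real.log (1 + γ i) with hLdef
  have hexpL : ∀ i, Real.exp (L i) = 1 + γ i := fun i => Real.exp_log (hγpos i)
  set ψ : ℝ → ℝ := fun u => h u * S u with hψdef
  have hψm : Measurable ψ := hhm.mul hSm
  set filt : ℝ → Finset (Fin m) := fun s => Finset.univ.filter (fun i => τ i ≤ s)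
    with hfiltdef
  have heqψ : ∀ t ∈ Set.Icc (0:ℝ) T,
      S t = φ 0 + (∫ u in (0:ℝ)..t, ψ u) + ∑ i ∈ filt t, γ i * Sm i := heq
  -- counting lemma for the jump filter
  have filt_count : ∀ (n : ℕ) (t : ℝ), (∀ i : Fin m, (i:ℕ) < n → τ i ≤ t) →
      (∀ i : Fin m, n ≤ (i:ℕ) → t < τ i) →
      filt t = Finset.univ.filter (fun i : Fin m => (i:ℕ) < n) := by
    intro n t h1 h2
    rw [hfiltdef]
    ext i
    simp only [Finset.mem_filter, Finset.mem_univ, true_and]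
    constructor
    · intro hi
      by_contra hik
      exact absurd hi (not_le.2 (h2 i (not_lt.1 hik)))
    · exact h1 i
  -- the fundamental step on a jump-free interval
  have key : ∀ l rk : ℝ, 0 ≤ l → l ≤ rk → rk ≤ T →
      IntegrableOn ψ (Set.Ioc 0 l) →
      S l = φ 0 * Real.exp ((∫ u in (0:ℝ)..l, h u) + ∑ i ∈ filt l, L i) →
      (∀ t, l ≤ t → t ≤ rk → filt t = filt l) →
      IntegrableOn ψ (Set.Ioc 0 rk) ∧
        ∀ t, l ≤ t → t ≤ rk →
          S t = φ 0 * Real.exp ((∫ u in (0:ℝ)..t, h u) + ∑ i ∈ filt t, L i) := by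
    intro l rk hl0 hlr hrT hPl hSl hfilt
    have heq' : ∀ t ∈ Set.Icc l rk,
        S t = (φ 0 + ∑ i ∈ filt l, γ i * Sm i) + ∫ u in (0:ℝ)..t, ψ u := by
      intro t ht
      have h1 := heqψ t ⟨hl0.trans ht.1, ht.2.trans hrT⟩
      rw [h1, hfilt t ht.1 ht.2]
      ring
    obtain ⟨hInt, hform⟩ := aux_extend hl0 hlr hhm hSm hhC hPl heq'
    refine ⟨hInt, fun t h1 h2 => ?_⟩
    have h3 := hform t ⟨h1, h2⟩
    have hsplit : (∫ u in (0:ℝ)..l, h u) + (∫ u in l..t, h u) = ∫ u in (0:ℝ)..t, h u :=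
      intervalIntegral.integral_add_adjacent_intervals
        (aux_intervalIntegrable_of_bounded hhm hhC 0 l)
        (aux_intervalIntegrable_of_bounded hhm hhC l t)
    rw [h3, hSl, hfilt t h1 h2, mul_assoc, ← Real.exp_add]
    congr 2
    linarith
  -- global bound on the candidate solution
  set MF : ℝ := |φ 0| * Real.exp (Cf * T + ∑ i, |L i|) with hMFdef
  have hRHSb : ∀ t, 0 ≤ t → t ≤ T →
      |φ 0 * Real.exp ((∫ u in (0:ℝ)..t, h u) + ∑ i ∈ filt t, L i)| ≤ MF := by
    intro t h1 h2
    rw [hMFdef, abs_mul, abs_of_pos (Real.exp_pos _)]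
    apply mul_le_mul_of_nonneg_left ?_ (abs_nonneg _)
    apply Real.exp_le_exp.2
    have e1 : (∫ u in (0:ℝ)..t, h u) ≤ Cf * t :=
      (le_abs_self _).trans (by simpa using aux_abs_intervalIntegral_le' hhm hhC h1)
    have e2 : (∑ i ∈ filt t, L i) ≤ ∑ i, |L i| := by
      calc ∑ i ∈ filt t, L i ≤ ∑ i ∈ filt t, |L i| :=
            Finset.sum_le_sum fun i _ => le_abs_self _
        _ ≤ ∑ i, |L i| := Finset.sum_le_sum_of_subset_of_nonneg
            (Finset.subset_univ _) (fun i _ _ => abs_nonneg _)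
    have e3 : Cf * t ≤ Cf * T := mul_le_mul_of_nonneg_left h2 hCf0
    linarith
  -- endpoint (jump) step
  have endstep : ∀ (l : ℝ) (k : Fin m), 0 ≤ l → l < τ k →
      IntegrableOn ψ (Set.Ioc 0 l) →
      S l = φ 0 * Real.exp ((∫ u in (0:ℝ)..l, h u) + ∑ i ∈ filt l, L i) →
      (∀ t, l ≤ t → t < τ k → filt t = filt l) →
      (filt (τ k) = insert k (filt l)) → (k ∉ filt l) →
      IntegrableOn ψ (Set.Ioc 0 (τ k)) ∧
        ∀ t, l ≤ t → t ≤ τ k →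
          S t = φ 0 * Real.exp ((∫ u in (0:ℝ)..t, h u) + ∑ i ∈ filt t, L i) := by
    intro l k hl0 hlk hPl hSl hfilt hfiltk hknot
    have formOn : ∀ t, l ≤ t → t < τ k →
        S t = φ 0 * Real.exp ((∫ u in (0:ℝ)..t, h u) + ∑ i ∈ filt t, L i) := by
      intro t h1 h2
      exact (key l t hl0 h1 (h2.le.trans (hτT k)) hPl hSl
        (fun r hr1 hr2 => hfilt r hr1 (lt_of_le_of_lt hr2 h2))).2 t h1 le_rfl
    have hPτ : IntegrableOn ψ (Set.Ioc 0 (τ k)) := by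
      have hIoo : IntegrableOn ψ (Set.Ioo l (τ k)) := by
        apply Measure.integrableOn_of_bounded (M := Cf * MF) measure_Ioo_lt_top.ne
          hψm.aestronglyMeasurable
        rw [ae_restrict_iff' measurableSet_Ioo]
        apply ae_of_all
        intro u hu
        have hb2 := hRHSb u (hl0.trans hu.1.le) (hu.2.le.trans (hτT k))
        rw [← formOn u hu.1.le hu.2] at hb2
        simp only [Real.norm_eq_abs, hψdef, abs_mul]
        exact mul_le_mul (hhC u) hb2 (abs_nonneg _) hCf0
      have hIoc : IntegrableOn ψ (Set.Ioc l (τ k)) := by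
        rwa [IntegrableOn, ← Measure.restrict_congr_set Ioo_ae_eq_Ioc]
      rw [show Set.Ioc 0 (τ k) = Set.Ioc 0 l ∪ Set.Ioc l (τ k) from
        (Set.Ioc_union_Ioc_eq_Ioc hl0 hlk.le).symm]
      exact hPl.union hIoc
    set ψ' : ℝ → ℝ := (Set.Ioc 0 (τ k)).indicator ψ with hψ'def
    have hIψ' : Integrable ψ' volume := hPτ.integrable_indicator measurableSet_Ioc
    have hcontI : Continuous fun t => ∫ u in (0:ℝ)..t, ψ' u :=
      intervalIntegral.continuous_primitive (fun _ _ => hIψ'.intervalIntegrable) 0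
    have hIeq : ∀ t, 0 ≤ t → t ≤ τ k →
        (∫ u in (0:ℝ)..t, ψ u) = ∫ u in (0:ℝ)..t, ψ' u := by
      intro t h1 h2
      rw [intervalIntegral.integral_of_le h1, intervalIntegral.integral_of_le h1]
      symm
      apply setIntegral_congr_fun measurableSet_Ioc
      intro u hu
      exact Set.indicator_of_mem (Set.Ioc_subset_Ioc le_rfl h2 hu) ψ
    have heqK : ∀ t, l ≤ t → t < τ k →
        S t = (φ 0 + ∑ i ∈ filt l, γ i * Sm i) + ∫ u in (0:ℝ)..t, ψ' u := by
      intro t h1 h2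
      have h3 := heqψ t ⟨hl0.trans h1, h2.le.trans (hτT k)⟩
      rw [h3, hfilt t h1 h2, hIeq t (hl0.trans h1) h2.le]
      ring
    have hmemIoo : Set.Ioo l (τ k) ∈ nhdsWithin (τ k) (Set.Iio (τ k)) :=
      Ioo_mem_nhdsLT_of_mem ⟨hlk, le_rfl⟩
    have limA : Filter.Tendsto S (nhdsWithin (τ k) (Set.Iio (τ k)))
        (nhds ((φ 0 + ∑ i ∈ filt l, γ i * Sm i) + ∫ u in (0:ℝ)..(τ k), ψ' u)) := by
      have hten : Filter.Tendsto
          (fun x => (φ 0 + ∑ i ∈ filt l, γ i * Sm i) + ∫ u in (0:ℝ)..x, ψ' u)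
          (nhdsWithin (τ k) (Set.Iio (τ k)))
          (nhds ((φ 0 + ∑ i ∈ filt l, γ i * Sm i) + ∫ u in (0:ℝ)..(τ k), ψ' u)) :=
        ((continuous_const.add hcontI).tendsto (τ k)).mono_left nhdsWithin_le_nhds
      refine Filter.Tendsto.congr' ?_ hten
      filter_upwards [hmemIoo] with t ht
      exact (heqK t ht.1.le ht.2).symm
    have limB : Filter.Tendsto S (nhdsWithin (τ k) (Set.Iio (τ k)))
        (nhds (φ 0 * Real.exp ((∫ u in (0:ℝ)..(τ k), h u) + ∑ i ∈ filt l, L i))) := by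
      have hcontH : Continuous fun t =>
          φ 0 * Real.exp ((∫ u in (0:ℝ)..t, h u) + ∑ i ∈ filt l, L i) :=
        continuous_const.mul (Real.continuous_exp.comp
          ((intervalIntegral.continuous_primitive
            (fun _ _ => aux_intervalIntegrable_of_bounded hhm hhC _ _) 0).add
            continuous_const))
      have hten : Filter.Tendsto
          (fun t => φ 0 * Real.exp ((∫ u in (0:ℝ)..t, h u) + ∑ i ∈ filt l, L i))
          (nhdsWithin (τ k) (Set.Iio (τ k)))
          (nhds (φ 0 * Real.exp ((∫ u in (0:ℝ)..(τ k), h u) + ∑ i ∈ filt l, L i))) :=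
        (hcontH.tendsto (τ k)).mono_left nhdsWithin_le_nhds
      refine Filter.Tendsto.congr' ?_ hten
      filter_upwards [hmemIoo] with t ht
      rw [formOn t ht.1.le ht.2, hfilt t ht.1.le ht.2]
    have hSmk1 : Sm k = (φ 0 + ∑ i ∈ filt l, γ i * Sm i) + ∫ u in (0:ℝ)..(τ k), ψ' u :=
      tendsto_nhds_unique (hSmlim k) limA
    have hSmk2 : Sm k = φ 0 * Real.exp ((∫ u in (0:ℝ)..(τ k), h u) + ∑ i ∈ filt l, L i) :=
      tendsto_nhds_unique (hSmlim k) limB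
    have hSτ : S (τ k) = (1 + γ k) * Sm k := by
      have h3 := heqψ (τ k) ⟨(hτpos k).le, hτT k⟩
      rw [hfiltk, Finset.sum_insert hknot, hIeq (τ k) (hτpos k).le le_rfl] at h3
      rw [h3, hSmk1]
      ring
    have hform_τ : S (τ k) =
        φ 0 * Real.exp ((∫ u in (0:ℝ)..(τ k), h u) + ∑ i ∈ filt (τ k), L i) := by
      rw [hSτ, hSmk2, hfiltk, Finset.sum_insert hknot, ← hexpL k]
      simp only [Real.exp_add]
      ring
    refine ⟨hPτ, fun t h1 h2 => ?_⟩
    rcases lt_or_eq_of_le h2 with hlt | he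
    · exact formOn t h1 hlt
    · rw [he]; exact hform_τ
  -- value at time zero
  have hfilt0 : ∀ t : ℝ, (∀ i : Fin m, t < τ i) → filt t = ∅ := by
    intro t ht
    rw [hfiltdef]
    exact Finset.filter_eq_empty_iff.2 fun i _ => not_le.2 (ht i)
  have S0 : S 0 = φ 0 := by
    have h1 := heqψ 0 ⟨le_rfl, hT.le⟩
    rw [hfilt0 0 hτpos] at h1
    simpa using h1
  have F0 : S 0 = φ 0 * Real.exp ((∫ u in (0:ℝ)..0, h u) + ∑ i ∈ filt 0, L i) := by
    rw [S0, hfilt0 0 hτpos]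
    simp
  have hP0 : IntegrableOn ψ (Set.Ioc 0 0) := by
    rw [Set.Ioc_self]
    exact integrableOn_empty
  -- the inductive structure
  set r : ℕ → ℝ := fun k => if hh : k < m then τ ⟨k, hh⟩ else T with hrdef
  have hrT' : ∀ k, r k ≤ T := by
    intro k
    by_cases hh : k < m
    · have hrk : r k = τ ⟨k, hh⟩ := dif_pos hh
      rw [hrk]; exact hτT _
    · have hrk : r k = T := dif_neg hh
      rw [hrk]
  have main : ∀ k : ℕ, k ≤ m →
      IntegrableOn ψ (Set.Ioc 0 (r k)) ∧
      ∀ t, 0 ≤ t → t ≤ r k →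
        S t = φ 0 * Real.exp ((∫ u in (0:ℝ)..t, h u) + ∑ i ∈ filt t, L i) := by
    intro k
    induction k with
    | zero =>
      intro _
      by_cases h0m : 0 < m
      · have hr0 : r 0 = τ ⟨0, h0m⟩ := dif_pos h0m
        have hfiltlt : ∀ t, 0 ≤ t → t < τ ⟨0, h0m⟩ → filt t = filt 0 := by
          intro t _ h2
          rw [hfilt0 0 hτpos, hfilt0 t]
          intro i
          exact h2.trans_le (hτmono.monotone (Fin.mk_le_of_le_val (Nat.zero_le _)))
        have hfiltk : filt (τ ⟨0, h0m⟩) = insert ⟨0, h0m⟩ (filt 0) := by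
          rw [hfilt0 0 hτpos, filt_count 1 (τ ⟨0, h0m⟩) ?_ ?_]
          · ext i
            simp only [Finset.mem_filter, Finset.mem_univ, true_and, Finset.mem_insert,
              Finset.notMem_empty, or_false]
            constructor
            · intro hi
              exact Fin.ext (show (i : ℕ) = 0 by omega)
            · intro hi
              rw [hi]
              exact Nat.zero_lt_one
          · intro i hi
            have hival : (i : ℕ) = 0 := by omega
            have he : i = (⟨0, h0m⟩ : Fin m) :=
              Fin.ext (show i.val = ((⟨0, h0m⟩ : Fin m)).val from hival)
            exact le_of_eq (congrArg τ he)
          · intro i hi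
            exact hτmono (Fin.lt_def.mpr (show (0 : ℕ) < (i : ℕ) by omega))
        have hknot : (⟨0, h0m⟩ : Fin m) ∉ filt 0 := by
          rw [hfilt0 0 hτpos]; exact Finset.notMem_empty _
        obtain ⟨hI, hf⟩ := endstep 0 ⟨0, h0m⟩ le_rfl (hτpos _) hP0 F0 hfiltlt hfiltk hknot
        rw [hr0]
        exact ⟨hI, fun t h1 h2 => hf t h1 h2⟩
      · have hm0 : m = 0 := by omega
        have hrT0 : r 0 = T := dif_neg h0m
        have hfiltconst : ∀ t, (0:ℝ) ≤ t → t ≤ T → filt t = filt 0 := by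
          intro t _ _
          have he : ∀ s : ℝ, filt s = ∅ := by
            intro s
            apply Finset.eq_empty_of_forall_notMem
            intro i _
            exact absurd i.isLt (by omega)
          rw [he t, he 0]
        obtain ⟨hI, hf⟩ := key 0 T le_rfl hT.le le_rfl hP0 F0 hfiltconst
        rw [hrT0]
        exact ⟨hI, hf⟩
    | succ n IH =>
      intro hk
      have hnm : n < m := by omega
      obtain ⟨Pn, Fn⟩ := IH (by omega)
      have hrn : r n = τ ⟨n, hnm⟩ := dif_pos hnm
      have hPl : IntegrableOn ψ (Set.Ioc 0 (τ ⟨n, hnm⟩)) := by rwa [hrn] at Pn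
      have hSl : S (τ ⟨n, hnm⟩) = φ 0 * Real.exp ((∫ u in (0:ℝ)..(τ ⟨n, hnm⟩), h u)
          + ∑ i ∈ filt (τ ⟨n, hnm⟩), L i) :=
        Fn _ (hτpos _).le (by rw [hrn])
      have hfiltl : filt (τ ⟨n, hnm⟩) = Finset.univ.filter (fun i : Fin m => (i:ℕ) < n + 1) := by
        apply filt_count
        · intro i hi
          exact hτmono.monotone (by rw [Fin.le_def]; simpa using Nat.lt_succ_iff.1 hi)
        · intro i hi
          exact hτmono (by rw [Fin.lt_def]; simpa using hi)
      by_cases hsm : n + 1 < m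
      · have hrs : r (n + 1) = τ ⟨n + 1, hsm⟩ := dif_pos hsm
        have hlk : τ ⟨n, hnm⟩ < τ ⟨n + 1, hsm⟩ :=
          hτmono (Fin.lt_def.mpr (Nat.lt_succ_self n))
        have hfiltlt : ∀ t, τ ⟨n, hnm⟩ ≤ t → t < τ ⟨n + 1, hsm⟩ →
            filt t = filt (τ ⟨n, hnm⟩) := by
          intro t h1 h2
          rw [hfiltl, filt_count (n + 1) t ?_ ?_]
          · intro i hi
            exact (hτmono.monotone (by rw [Fin.le_def]; simpa using Nat.lt_succ_iff.1 hi)).trans h1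
          · intro i hi
            exact h2.trans_le (hτmono.monotone (by rw [Fin.le_def]; simpa using hi))
        have hfiltk : filt (τ ⟨n + 1, hsm⟩) = insert ⟨n + 1, hsm⟩ (filt (τ ⟨n, hnm⟩)) := by
          rw [hfiltl, filt_count (n + 2) (τ ⟨n + 1, hsm⟩) ?_ ?_]
          · ext i
            simp only [Finset.mem_filter, Finset.mem_univ, true_and, Finset.mem_insert]
            constructor
            · intro hi
              rcases Nat.lt_succ_iff_lt_or_eq.1 hi with h' | h'
              · exact Or.inr h'
              · exact Or.inl (Fin.ext (show (i : ℕ) = n + 1 from h'))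
            · rintro (hi | hi)
              · rw [hi]
                exact Nat.lt_succ_self _
              · omega
          · intro i hi
            exact hτmono.monotone (by rw [Fin.le_def]; simpa using Nat.lt_succ_iff.1 hi)
          · intro i hi
            exact hτmono (by rw [Fin.lt_def]; simp only; omega)
        have hknot : (⟨n + 1, hsm⟩ : Fin m) ∉ filt (τ ⟨n, hnm⟩) := by
          rw [hfiltl]
          simp only [Finset.mem_filter, Finset.mem_univ, true_and]
          exact fun hmem => Nat.lt_irrefl (n + 1) hmem
        obtain ⟨hI, hf⟩ := endstep (τ ⟨n, hnm⟩) ⟨n + 1, hsm⟩ (hτpos _).le hlk hPl hSl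
          hfiltlt hfiltk hknot
        rw [hrs]
        refine ⟨hI, fun t h1 h2 => ?_⟩
        rcases le_or_gt t (τ ⟨n, hnm⟩) with hcase | hcase
        · exact Fn t h1 (by rw [hrn]; exact hcase)
        · exact hf t hcase.le h2
      · have hem : n + 1 = m := by omega
        have hrs : r (n + 1) = T := dif_neg hsm
        have hfiltconst : ∀ t, τ ⟨n, hnm⟩ ≤ t → t ≤ T → filt t = filt (τ ⟨n, hnm⟩) := by
          intro t h1 _
          rw [hfiltl, filt_count (n + 1) t ?_ ?_]
          · intro i hi
            exact (hτmono.monotone (by rw [Fin.le_def]; simpa using Nat.lt_succ_iff.1 hi)).trans h1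
          · intro i hi
            exact absurd i.isLt (by omega)
        obtain ⟨hI, hf⟩ := key (τ ⟨n, hnm⟩) T (hτpos _).le (hτT _) le_rfl hPl hSl hfiltconst
        rw [hrs]
        refine ⟨hI, fun t h1 h2 => ?_⟩
        rcases le_or_gt t (τ ⟨n, hnm⟩) with hcase | hcase
        · exact Fn t h1 (by rw [hrn]; exact hcase)
        · exact hf t hcase.le h2
  intro t ht
  have hrm : r m = T := dif_neg (lt_irrefl m)
  exact (main m le_rfl).2 t ht.1 (by rw [hrm]; exact ht.2)
end

section
/- Let b > 0, let φ : [-b,0] → ℝ be bounded measurable with φ(0) > 0, let f : ℝ → ℝ be bounded measurable, and let g : ℝ → ℝ be measurable with 0 ≤ g(x) ≤ α₀/R for all x ∈ ℝ, for some constant α₀ ∈ (0,1). Then almost surely there exists exactly one solution S of the delayed jump equation driven by the compound Poisson process Z, and this solution satisfies S(t) > 0 for every t ∈ [0,T]. -/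
open MeasureTheory ProbabilityTheory Filter Set

/-- Pathwise solution of the delayed jump equation
`dS(t) = f(S(t-b)) S(t) dt + g(S(t-b)) S(t-) dZ(t)` driven by a compound Poisson
process with jump times `τ` and jump sizes `Y`.  `Sm i` is the left limit `S(τ i −)`. -/
def IsSolution (b T : ℝ) (φ f g : ℝ → ℝ) (τ Y : ℕ → ℝ) (S : ℝ → ℝ) : Prop :=
  (∀ t ∈ Set.Icc (-b) (0 : ℝ), S t = φ t) ∧
  ∃ Sm : ℕ → ℝ,
    (∀ i, τ i ≤ T → Filter.Tendsto S (nhdsWithin (τ i) (Set.Iio (τ i))) (nhds (Sm i))) ∧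
    ∀ t ∈ Set.Icc (0 : ℝ) T,
      S t = φ 0 + (∫ u in (0 : ℝ)..t, f (S (u - b)) * S u)
        + ∑' i : ℕ, if τ i ≤ t then g (S (τ i - b)) * Y i * Sm i else 0

open intervalIntegral


lemma bdd_intInt_on {h : ℝ → ℝ} (hm : Measurable h) {C : ℝ} {s t : ℝ}
    (hC : ∀ x ∈ Set.uIcc s t, |h x| ≤ C) : IntervalIntegrable h volume s t := by
  rw [intervalIntegrable_iff]
  have hfin : volume (Set.uIoc s t) < ⊤ := measure_Ioc_lt_top
  refine Integrable.mono' (g := fun _ => C) (integrableOn_const hfin.ne)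
    hm.aestronglyMeasurable.restrict ?_
  refine (ae_restrict_iff' measurableSet_uIoc).2 (ae_of_all _ fun x hx => ?_)
  simpa [Real.norm_eq_abs] using hC x (uIoc_subset_uIcc hx)

lemma bdd_intInt {h : ℝ → ℝ} (hm : Measurable h) {C : ℝ} (hC : ∀ x, |h x| ≤ C)
    (u v : ℝ) : IntervalIntegrable h volume u v :=
  bdd_intInt_on hm (fun x _ => hC x)

lemma exp_sub_one_le {d : ℝ} (hd : 0 ≤ d) : Real.exp d - 1 ≤ d * Real.exp d := by
  have h1 : -d + 1 ≤ Real.exp (-d) := Real.add_one_le_exp (-d)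
  have h2 : Real.exp (-d) * Real.exp d = 1 := by
    rw [← Real.exp_add]; simp
  nlinarith [Real.exp_pos d]

lemma exp_diff_le {K x y : ℝ} (hx : |x| ≤ K) (hy : |y| ≤ K) :
    |Real.exp x - Real.exp y| ≤ Real.exp (3 * K) * |x - y| := by
  have hK : 0 ≤ K := le_trans (abs_nonneg x) hx
  wlog hxy : y ≤ x generalizing x y
  · have h := this hy hx (le_of_not_ge hxy)
    rw [abs_sub_comm, abs_sub_comm x y]; exact h
  have hd : 0 ≤ x - y := sub_nonneg.2 hxy
  have h1 : Real.exp x - Real.exp y = Real.exp y * (Real.exp (x - y) - 1) := by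
    rw [mul_sub, mul_one, ← Real.exp_add]; ring_nf
  have h2 : Real.exp (x - y) - 1 ≤ (x - y) * Real.exp (x - y) := exp_sub_one_le hd
  have hyK : Real.exp y ≤ Real.exp K := Real.exp_le_exp.2 (le_trans (le_abs_self y) hy)
  have hd2K : x - y ≤ 2 * K := by
    have h3 := le_trans (le_abs_self x) hx
    have h4 := neg_abs_le y
    have h5 := neg_le_of_abs_le hy
    linarith
  have hxyK : Real.exp (x - y) ≤ Real.exp (2 * K) := Real.exp_le_exp.2 hd2K
  have h5 : 0 ≤ Real.exp (x - y) - 1 := by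
    have := Real.one_le_exp hd
    linarith
  have hnn : 0 ≤ Real.exp x - Real.exp y := by
    rw [h1]; positivity
  rw [abs_of_nonneg hnn, abs_of_nonneg hd, h1,
    show (3:ℝ) * K = K + 2 * K by ring, Real.exp_add]
  have e1 : Real.exp y * (Real.exp (x - y) - 1) ≤ Real.exp K * (Real.exp (x - y) - 1) := by
    apply mul_le_mul_of_nonneg_right hyK h5
  have e2 : Real.exp (x - y) - 1 ≤ (x - y) * Real.exp (2 * K) := by
    calc Real.exp (x-y) - 1 ≤ (x - y) * Real.exp (x - y) := h2
    _ ≤ (x - y) * Real.exp (2 * K) := mul_le_mul_of_nonneg_left hxyK hd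
  calc Real.exp y * (Real.exp (x - y) - 1) ≤ Real.exp K * (Real.exp (x - y) - 1) := e1
  _ ≤ Real.exp K * ((x - y) * Real.exp (2 * K)) :=
      mul_le_mul_of_nonneg_left e2 (Real.exp_pos K).le
  _ = Real.exp K * Real.exp (2 * K) * (x - y) := by ring

lemma expFTC_cont {a : ℝ → ℝ} (hc : Continuous a) (s t : ℝ) :
    ∫ u in s..t, a u * Real.exp (∫ x in s..u, a x) =
      Real.exp (∫ x in s..t, a x) - 1 := by
  have hii : ∀ u v : ℝ, IntervalIntegrable a volume u v := fun u v =>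
    hc.intervalIntegrable u v
  have hprim : Continuous fun u => ∫ x in s..u, a x := continuous_primitive hii s
  have hD : ∀ u : ℝ, HasDerivAt (fun w => Real.exp (∫ x in s..w, a x))
      (a u * Real.exp (∫ x in s..u, a x)) u := by
    intro u
    have hF : HasDerivAt (fun w => ∫ x in s..w, a x) (a u) u :=
      integral_hasDerivAt_right (hii s u)
        (hc.stronglyMeasurable.stronglyMeasurableAtFilter) hc.continuousAt
    simpa [mul_comm] using hF.exp
  have hint : IntervalIntegrable (fun u => a u * Real.exp (∫ x in s..u, a x)) volume s t :=
    (hc.mul (Real.continuous_exp.comp hprim)).intervalIntegrable s t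
  rw [integral_eq_sub_of_hasDerivAt (fun x _ => hD x) hint]
  simp

lemma expFTC {a : ℝ → ℝ} (ha : Measurable a) {Ma : ℝ} (hMa : ∀ x, |a x| ≤ Ma)
    {s t : ℝ} (hst : s ≤ t) :
    ∫ u in s..t, a u * Real.exp (∫ x in s..u, a x) =
      Real.exp (∫ x in s..t, a x) - 1 := by
  have hMa0 : 0 ≤ Ma := le_trans (abs_nonneg _) (hMa 0)
  set K₀ : ℝ := Ma * (t - s) with hK₀
  have hK₀0 : 0 ≤ K₀ := mul_nonneg hMa0 (by linarith)
  set Kb : ℝ := Real.exp K₀ + Ma * (t - s) * Real.exp (3 * K₀) + Real.exp (3 * K₀) with hKb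
  have hKb0 : 0 < Kb := by positivity
  set X : ℝ := (∫ u in s..t, a u * Real.exp (∫ x in s..u, a x)) -
      (Real.exp (∫ x in s..t, a x) - 1) with hX
  have key : ∀ ε : ℝ, 0 < ε → |X| ≤ Kb * ε := by
    intro ε hε
    obtain ⟨c, hccont, hcbd, hcL1⟩ : ∃ c : ℝ → ℝ, Continuous c ∧ (∀ x, |c x| ≤ Ma) ∧
        ∫ x in s..t, |a x - c x| ≤ ε := by
      have hInt : Integrable ((Ioc s t).indicator a) volume := by
        rw [integrable_indicator_iff measurableSet_Ioc]
        have hfin : volume (Ioc s t) < ⊤ := measure_Ioc_lt_top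
        refine Integrable.mono' (g := fun _ => Ma) (integrableOn_const hfin.ne)
          ha.aestronglyMeasurable.restrict ?_
        exact ae_of_all _ fun x => by simpa [Real.norm_eq_abs] using hMa x
      obtain ⟨g, _, hgL1, hgcont, hgint⟩ :=
        hInt.exists_hasCompactSupport_integral_sub_le hε
      have hclcont : Continuous fun x => max (-Ma) (min Ma (g x)) :=
        continuous_const.max (continuous_const.min hgcont)
      refine ⟨fun x => max (-Ma) (min Ma (g x)), hclcont, ?_, ?_⟩
      · intro x
        rw [abs_le]
        exact ⟨le_max_left _ _, max_le (by linarith) (min_le_left _ _)⟩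
      · have hptw : ∀ x ∈ Ioc s t, |a x - max (-Ma) (min Ma (g x))| ≤
            ‖(Ioc s t).indicator a x - g x‖ := by
          intro x hx
          rw [indicator_of_mem hx, Real.norm_eq_abs]
          have h1 : -Ma ≤ a x := neg_le_of_abs_le (hMa x)
          have h2 : a x ≤ Ma := le_of_abs_le (hMa x)
          rcases le_total (g x) (-Ma) with h | h
          · rw [min_eq_right (by linarith), max_eq_left h]
            rw [abs_of_nonneg (by linarith), abs_of_nonneg (by linarith)]
            linarith
          · rcases le_total Ma (g x) with h' | h'
            · rw [min_eq_left h', max_eq_right (by linarith)]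
              rw [abs_of_nonpos (by linarith), abs_of_nonpos (by linarith)]
              linarith
            · rw [min_eq_right h', max_eq_right h]
        rw [integral_of_le hst]
        have hain : IntegrableOn a (Ioc s t) volume := by
          rw [← intervalIntegrable_iff_integrableOn_Ioc_of_le hst]
          exact bdd_intInt ha hMa s t
        have hgint2 : Integrable ((Ioc s t).indicator a - g) volume := hInt.sub hgint
        calc ∫ x in Ioc s t, |a x - max (-Ma) (min Ma (g x))|
            ≤ ∫ x in Ioc s t, ‖(Ioc s t).indicator a x - g x‖ := by
              refine setIntegral_mono_on ?_ ?_ measurableSet_Ioc hptw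
              · refine Integrable.abs (Integrable.sub hain ?_)
                rw [← IntegrableOn, ← intervalIntegrable_iff_integrableOn_Ioc_of_le hst]
                exact hclcont.intervalIntegrable s t
              · exact hgint2.norm.integrableOn
          _ ≤ ∫ x, ‖(Ioc s t).indicator a x - g x‖ :=
              setIntegral_le_integral hgint2.norm (ae_of_all _ fun x => norm_nonneg _)
          _ ≤ ε := hgL1
    -- now compare the two identities
    set F : ℝ → ℝ := fun u => ∫ x in s..u, a x with hF
    set G : ℝ → ℝ := fun u => ∫ x in s..u, c x with hG
    have hFcont : Continuous F := continuous_primitive (bdd_intInt ha hMa) s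
    have hGcont : Continuous G := continuous_primitive (hccont.intervalIntegrable) s
    have haci : IntervalIntegrable (fun x => |a x - c x|) volume s t :=
      ((bdd_intInt ha hMa s t).sub (hccont.intervalIntegrable s t)).abs
    have hFG : ∀ u ∈ Icc s t, |F u - G u| ≤ ε := by
      intro u hu
      have h1 : F u - G u = ∫ x in s..u, (a x - c x) :=
        (integral_sub (bdd_intInt ha hMa s u) (hccont.intervalIntegrable s u)).symm
      rw [h1]
      calc |∫ x in s..u, (a x - c x)| ≤ ∫ x in s..u, |a x - c x| :=
            abs_integral_le_integral_abs hu.1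
        _ ≤ ∫ x in s..t, |a x - c x| := by
            rw [← integral_add_adjacent_intervals (a := s) (b := u) (c := t)
              (haci.mono_set (by rw [uIcc_of_le hu.1, uIcc_of_le hst]; exact Icc_subset_Icc le_rfl hu.2))
              (haci.mono_set (by rw [uIcc_of_le hu.2, uIcc_of_le hst]; exact Icc_subset_Icc hu.1 le_rfl))]
            have : 0 ≤ ∫ x in u..t, |a x - c x| :=
              integral_nonneg hu.2 (fun x _ => abs_nonneg _)
            linarith
        _ ≤ ε := hcL1
    have hFb : ∀ u ∈ Icc s t, |F u| ≤ K₀ := by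
      intro u hu
      have h1 : ‖∫ x in s..u, a x‖ ≤ Ma * |u - s| := norm_integral_le_of_norm_le_const
        (f := a) (C := Ma) (fun x _ => by rw [Real.norm_eq_abs]; exact hMa x)
      rw [Real.norm_eq_abs] at h1
      calc |F u| ≤ Ma * |u - s| := h1
        _ ≤ Ma * (t - s) := by
            rw [abs_of_nonneg (by linarith [hu.1])]
            exact mul_le_mul_of_nonneg_left (by linarith [hu.2]) hMa0
    have hGb : ∀ u ∈ Icc s t, |G u| ≤ K₀ := by
      intro u hu
      have h1 : ‖∫ x in s..u, c x‖ ≤ Ma * |u - s| := norm_integral_le_of_norm_le_const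
        (f := c) (C := Ma) (fun x _ => by rw [Real.norm_eq_abs]; exact hcbd x)
      rw [Real.norm_eq_abs] at h1
      calc |G u| ≤ Ma * |u - s| := h1
        _ ≤ Ma * (t - s) := by
            rw [abs_of_nonneg (by linarith [hu.1])]
            exact mul_le_mul_of_nonneg_left (by linarith [hu.2]) hMa0
    have hexpd : ∀ u ∈ Icc s t, |Real.exp (F u) - Real.exp (G u)| ≤ Real.exp (3 * K₀) * ε := by
      intro u hu
      calc |Real.exp (F u) - Real.exp (G u)| ≤ Real.exp (3 * K₀) * |F u - G u| :=
            exp_diff_le (hFb u hu) (hGb u hu)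
        _ ≤ Real.exp (3 * K₀) * ε :=
            mul_le_mul_of_nonneg_left (hFG u hu) (Real.exp_pos _).le
    have hIa : IntervalIntegrable (fun u => a u * Real.exp (F u)) volume s t := by
      refine bdd_intInt_on (ha.mul hFcont.measurable.exp) (C := Ma * Real.exp K₀) ?_
      intro x hx
      rw [uIcc_of_le hst] at hx
      rw [Pi.mul_apply, abs_mul, Real.abs_exp]
      exact mul_le_mul (hMa x) (Real.exp_le_exp.2 (le_of_abs_le (hFb x hx))) (Real.exp_pos _).le hMa0
    have hIc : IntervalIntegrable (fun u => c u * Real.exp (G u)) volume s t :=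
      (hccont.mul (Real.continuous_exp.comp hGcont)).intervalIntegrable s t
    have hdiff1 : |(∫ u in s..t, a u * Real.exp (F u)) - ∫ u in s..t, c u * Real.exp (G u)| ≤
        Real.exp K₀ * ε + Ma * (t - s) * Real.exp (3 * K₀) * ε := by
      rw [← integral_sub hIa hIc]
      have hptb : ∀ u ∈ Icc s t, |a u * Real.exp (F u) - c u * Real.exp (G u)| ≤
          |a u - c u| * Real.exp K₀ + Ma * (Real.exp (3 * K₀) * ε) := by
        intro u hu
        have h1 : a u * Real.exp (F u) - c u * Real.exp (G u) =
            (a u - c u) * Real.exp (F u) + c u * (Real.exp (F u) - Real.exp (G u)) := by ring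
        rw [h1]
        calc |(a u - c u) * Real.exp (F u) + c u * (Real.exp (F u) - Real.exp (G u))|
            ≤ |(a u - c u) * Real.exp (F u)| + |c u * (Real.exp (F u) - Real.exp (G u))| :=
              abs_add_le _ _
          _ ≤ |a u - c u| * Real.exp K₀ + Ma * (Real.exp (3 * K₀) * ε) := by
              rw [abs_mul, abs_mul, Real.abs_exp]
              refine add_le_add ?_ ?_
              · exact mul_le_mul_of_nonneg_left
                  (Real.exp_le_exp.2 (le_of_abs_le (hFb u hu))) (abs_nonneg _)
              · exact mul_le_mul (hcbd u) (hexpd u hu) (abs_nonneg _) hMa0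
      calc |∫ u in s..t, (a u * Real.exp (F u) - c u * Real.exp (G u))|
          ≤ ∫ u in s..t, |a u * Real.exp (F u) - c u * Real.exp (G u)| :=
            abs_integral_le_integral_abs hst
        _ ≤ ∫ u in s..t, (|a u - c u| * Real.exp K₀ + Ma * (Real.exp (3 * K₀) * ε)) := by
            refine integral_mono_on hst (hIa.sub hIc).abs ?_ hptb
            exact (haci.mul_const _).add (intervalIntegrable_const)
        _ = Real.exp K₀ * (∫ u in s..t, |a u - c u|) + (t - s) * (Ma * (Real.exp (3 * K₀) * ε)) := by
            rw [integral_add (haci.mul_const _) intervalIntegrable_const, intervalIntegral.integral_const]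
            rw [intervalIntegral.integral_mul_const]
            simp [mul_comm]
        _ ≤ Real.exp K₀ * ε + Ma * (t - s) * Real.exp (3 * K₀) * ε := by
            have h2 : Real.exp K₀ * (∫ u in s..t, |a u - c u|) ≤ Real.exp K₀ * ε :=
              mul_le_mul_of_nonneg_left hcL1 (Real.exp_pos _).le
            nlinarith [Real.exp_pos K₀]
    have hcid := expFTC_cont hccont s t
    have hdiff2 : |Real.exp (G t) - Real.exp (F t)| ≤ Real.exp (3 * K₀) * ε := by
      rw [abs_sub_comm]
      exact hexpd t ⟨hst, le_refl t⟩
    have hXsplit : X = ((∫ u in s..t, a u * Real.exp (F u)) - ∫ u in s..t, c u * Real.exp (G u))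
        + (Real.exp (G t) - Real.exp (F t)) := by
      have hcid' : (∫ u in s..t, c u * Real.exp (G u)) = Real.exp (G t) - 1 := hcid
      have hXd : X = (∫ u in s..t, a u * Real.exp (F u)) - (Real.exp (F t) - 1) := hX
      rw [hXd, hcid']; ring
    calc |X| ≤ |(∫ u in s..t, a u * Real.exp (F u)) - ∫ u in s..t, c u * Real.exp (G u)|
        + |Real.exp (G t) - Real.exp (F t)| := by rw [hXsplit]; exact abs_add_le _ _
      _ ≤ (Real.exp K₀ * ε + Ma * (t - s) * Real.exp (3 * K₀) * ε) + Real.exp (3 * K₀) * ε :=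
          add_le_add hdiff1 hdiff2
      _ = Kb * ε := by rw [hKb]; ring
  have hX0 : X = 0 := by
    by_contra h
    have h0 : 0 < |X| := abs_pos.2 h
    have h1 := key (|X| / (2 * Kb)) (by positivity)
    have h2 : Kb * (|X| / (2 * Kb)) = |X| / 2 := by field_simp
    rw [h2] at h1
    linarith
  have := sub_eq_zero.1 hX0
  exact this

lemma gronwall0 {u : ℝ → ℝ} (hm : Measurable u) {s c K C : ℝ} (hC : 0 ≤ C)
    (hnn : ∀ t ∈ Icc s c, 0 ≤ u t) (hK : ∀ t ∈ Icc s c, u t ≤ K)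
    (hineq : ∀ t ∈ Icc s c, u t ≤ C * ∫ x in s..t, u x) :
    ∀ t ∈ Icc s c, u t ≤ 0 := by
  rcases le_or_gt s c with hsc | hsc
  swap
  · intro t ht; exact absurd (le_trans ht.1 ht.2) (not_le.2 hsc)
  have hK0 : 0 ≤ K := le_trans (hnn s ⟨le_rfl, hsc⟩) (hK s ⟨le_rfl, hsc⟩)
  have hint : ∀ t ∈ Icc s c, IntervalIntegrable u volume s t := by
    intro t ht
    refine bdd_intInt_on hm (C := K) ?_
    intro x hx
    rw [uIcc_of_le ht.1] at hx
    have hx' : x ∈ Icc s c := ⟨hx.1, le_trans hx.2 ht.2⟩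
    rw [abs_le]; exact ⟨by linarith [hnn x hx'], hK x hx'⟩
  have main : ∀ n : ℕ, ∀ t ∈ Icc s c, u t ≤ K * (C * (t - s)) ^ n / n.factorial := by
    intro n
    induction n with
    | zero => intro t ht; simpa using hK t ht
    | succ n ih =>
      intro t ht
      have hts : s ≤ t := ht.1
      have hb : ∀ x ∈ Icc s t, u x ≤ K * (C * (x - s)) ^ n / n.factorial := fun x hx =>
        ih x ⟨hx.1, le_trans hx.2 ht.2⟩
      have hrint : IntervalIntegrable (fun x => K * (C * (x - s)) ^ n / n.factorial) volume s t :=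
        (Continuous.intervalIntegrable (by continuity) s t)
      have h1 : (∫ x in s..t, u x) ≤ ∫ x in s..t, K * (C * (x - s)) ^ n / n.factorial :=
        integral_mono_on hts (hint t ht) hrint hb
      have h2 : (∫ x in s..t, K * (C * (x - s)) ^ n / n.factorial)
          = K / n.factorial * (C ^ n * ((t - s) ^ (n+1) / (n + 1))) := by
        have e0 : ∀ x : ℝ, K * (C * (x - s)) ^ n / n.factorial
            = (K / n.factorial * C ^ n) * (x - s) ^ n := by
          intro x; rw [mul_pow]; ring
        simp_rw [e0]
        rw [intervalIntegral.integral_const_mul]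
        have e1 : (∫ x in s..t, (x - s) ^ n) = (t - s) ^ (n+1) / (n+1) := by
          rw [intervalIntegral.integral_comp_sub_right (fun y => y ^ n) s]
          simp [integral_pow]
        rw [e1]; ring
      calc u t ≤ C * ∫ x in s..t, u x := hineq t ht
        _ ≤ C * (K / n.factorial * (C ^ n * ((t - s) ^ (n+1) / (n + 1)))) := by
            rw [← h2]; exact mul_le_mul_of_nonneg_left h1 hC
        _ = K * (C * (t - s)) ^ (n+1) / (n+1).factorial := by
            rw [Nat.factorial_succ, mul_pow]
            have hnf : (n.factorial : ℝ) ≠ 0 := Nat.cast_ne_zero.2 n.factorial_ne_zero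
            have hn1 : ((n : ℝ) + 1) ≠ 0 := by positivity
            push_cast
            field_simp
            ring
  intro t ht
  have hlim : Tendsto (fun n : ℕ => K * (C * (t - s)) ^ n / n.factorial) atTop (nhds 0) := by
    have := (FloorSemiring.tendsto_pow_div_factorial_atTop (K := ℝ) (C * (t - s))).const_mul K
    simpa [mul_div_assoc] using this
  exact ge_of_tendsto' hlim fun n => main n t ht

section Window

variable {τ : ℕ → ℝ} (hτm : StrictMono τ)

/-- the solution candidate on one window -/
noncomputable def wSol (a : ℝ → ℝ) (τ : ℕ → ℝ) (v c : ℝ) (γ : ℕ → ℝ) (F : Finset ℕ)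
    (u : ℝ) : ℝ :=
  v * Real.exp (∫ x in c..u, a x) * ∏ i ∈ F, if τ i ≤ u then 1 + γ i else 1

lemma wSol_measurable {a : ℝ → ℝ} (ha : Measurable a) {Ma : ℝ} (hMa : ∀ x, |a x| ≤ Ma)
    (v c : ℝ) (γ : ℕ → ℝ) (F : Finset ℕ) : Measurable (wSol a τ v c γ F) := by
  apply Measurable.mul
  · exact measurable_const.mul
      ((Real.continuous_exp.comp (continuous_primitive (bdd_intInt ha hMa) c)).measurable)
  · refine Finset.measurable_prod _ fun i _ => Measurable.ite ?_ measurable_const measurable_const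
    exact measurableSet_le measurable_const measurable_id

lemma wSol_intInt {a : ℝ → ℝ} (ha : Measurable a) {Ma : ℝ} (hMa : ∀ x, |a x| ≤ Ma)
    (v c : ℝ) (γ : ℕ → ℝ) (F : Finset ℕ) {s t : ℝ} (hcs : c ≤ s) (hst : s ≤ t) :
    IntervalIntegrable (fun u => a u * wSol a τ v c γ F u) volume s t := by
  have hMa0 : 0 ≤ Ma := le_trans (abs_nonneg _) (hMa 0)
  refine bdd_intInt_on ((ha.mul (wSol_measurable ha hMa v c γ F)))
    (C := Ma * (|v| * Real.exp (Ma * (t - c)) * ∏ i ∈ F, max |1 + γ i| 1)) ?_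
  intro x hx
  rw [uIcc_of_le hst] at hx
  rw [Pi.mul_apply, abs_mul]
  refine mul_le_mul (hMa x) ?_ (abs_nonneg _) hMa0
  unfold wSol
  rw [abs_mul, abs_mul]
  refine mul_le_mul (mul_le_mul le_rfl ?_ (abs_nonneg _) (abs_nonneg _)) ?_ (abs_nonneg _)
    (by positivity)
  · rw [Real.abs_exp]
    apply Real.exp_le_exp.2
    have h1 : ‖∫ u in c..x, a u‖ ≤ Ma * |x - c| := norm_integral_le_of_norm_le_const
      (f := a) (C := Ma) (fun z _ => by rw [Real.norm_eq_abs]; exact hMa z)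
    rw [Real.norm_eq_abs] at h1
    have h2 : |x - c| ≤ t - c := by
      rw [abs_of_nonneg (by linarith [hx.1])]; linarith [hx.2]
    calc (∫ u in c..x, a u) ≤ |∫ u in c..x, a u| := le_abs_self _
      _ ≤ Ma * |x - c| := h1
      _ ≤ Ma * (t - c) := mul_le_mul_of_nonneg_left h2 hMa0
  · rw [Finset.abs_prod]
    refine Finset.prod_le_prod (fun i _ => abs_nonneg _) fun i _ => ?_
    by_cases h : τ i ≤ x
    · rw [if_pos h]; exact le_max_left _ _
    · rw [if_neg h]; simp

include hτm in
lemma windowEq {a : ℝ → ℝ} (ha : Measurable a) {Ma : ℝ} (hMa : ∀ x, |a x| ≤ Ma)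
    (v c : ℝ) (γ : ℕ → ℝ) :
    ∀ (n : ℕ) (F : Finset ℕ), (∀ i ∈ F, c < τ i) → ∀ t, c ≤ t →
      (F.filter (fun i => τ i ≤ t)).card = n →
      wSol a τ v c γ F t
        = v + (∫ u in c..t, a u * wSol a τ v c γ F u)
          + ∑ i ∈ F, (if τ i ≤ t then
              γ i * (v * Real.exp (∫ x in c..(τ i), a x) *
                ∏ j ∈ F, if τ j < τ i then 1 + γ j else 1) else 0) := by
  intro n
  induction n with
  | zero =>
    intro F hF t hct hcard
    have hnone : ∀ i ∈ F, ¬ τ i ≤ t := by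
      intro i hi hit
      have : i ∈ F.filter (fun i => τ i ≤ t) := Finset.mem_filter.2 ⟨hi, hit⟩
      rw [Finset.card_eq_zero.1 hcard] at this
      exact absurd this (Finset.notMem_empty i)
    have hprod1 : ∀ u, u ≤ t → (∏ i ∈ F, if τ i ≤ u then 1 + γ i else 1) = 1 :=
      fun u hu => Finset.prod_eq_one fun i hi =>
        if_neg (fun h => hnone i hi (le_trans h hu))
    have hsum0 : (∑ i ∈ F, (if τ i ≤ t then
        γ i * (v * Real.exp (∫ x in c..(τ i), a x) *
          ∏ j ∈ F, if τ j < τ i then 1 + γ j else 1) else 0)) = 0 :=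
      Finset.sum_eq_zero fun i hi => if_neg (hnone i hi)
    have hintcongr : (∫ u in c..t, a u * wSol a τ v c γ F u)
        = ∫ u in c..t, v * (a u * Real.exp (∫ x in c..u, a x)) := by
      refine integral_congr fun u hu => ?_
      rw [uIcc_of_le hct] at hu
      unfold wSol
      rw [hprod1 u hu.2]; ring
    rw [hintcongr, intervalIntegral.integral_const_mul, expFTC ha hMa hct, hsum0]
    unfold wSol
    rw [hprod1 t le_rfl]
    ring
  | succ n ih =>
    intro F hF t hct hcard
    have hne : (F.filter (fun i => τ i ≤ t)).Nonempty :=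
      Finset.card_pos.1 (by rw [hcard]; exact n.succ_pos)
    obtain ⟨istar, histar, hmax'⟩ := Finset.exists_max_image _ τ hne
    rw [Finset.mem_filter] at histar
    obtain ⟨hisF, hist⟩ := histar
    set s := τ istar with hs
    have hcs : c < s := hF _ hisF
    have hst : s ≤ t := hist
    have hmax : ∀ i ∈ F, τ i ≤ t → τ i ≤ s := fun i hi hit =>
      hmax' i (Finset.mem_filter.2 ⟨hi, hit⟩)
    set F' := F.erase istar with hF'
    have hF'sub : ∀ i ∈ F', c < τ i := fun i hi => hF i (Finset.mem_of_mem_erase hi)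
    have hfilter_eq : F'.filter (fun i => τ i ≤ s) = (F.filter (fun i => τ i ≤ t)).erase istar := by
      ext j
      simp only [Finset.mem_filter, Finset.mem_erase, hF']
      constructor
      · rintro ⟨⟨hjne, hjF⟩, hjs⟩
        exact ⟨hjne, hjF, le_trans hjs hst⟩
      · rintro ⟨hjne, hjF, hjt⟩
        exact ⟨⟨hjne, hjF⟩, hmax j hjF hjt⟩
    have hcard' : (F'.filter (fun i => τ i ≤ s)).card = n := by
      rw [hfilter_eq, Finset.card_erase_of_mem (Finset.mem_filter.2 ⟨hisF, hist⟩), hcard]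
      simp
    have hIH := ih F' hF'sub s (le_of_lt hcs) hcard'
    -- relations between wSol over F and over F'
    have hlt_prod : ∀ u, ¬ τ istar ≤ u → wSol a τ v c γ F u = wSol a τ v c γ F' u := by
      intro u hu
      unfold wSol
      rw [← Finset.mul_prod_erase F _ hisF, if_neg hu, one_mul]
    have hats : wSol a τ v c γ F s = (1 + γ istar) * wSol a τ v c γ F' s := by
      unfold wSol
      rw [← Finset.mul_prod_erase F _ hisF, if_pos (le_refl s)]
      ring
    -- the integral from c to s agrees
    have hae : ∀ᵐ x : ℝ, x ≠ s := by
      rw [ae_iff]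
      simpa [not_not, setOf_eq_eq_singleton] using measure_singleton (μ := volume) s
    have hint_cs : (∫ u in c..s, a u * wSol a τ v c γ F' u)
        = ∫ u in c..s, a u * wSol a τ v c γ F u := by
      refine intervalIntegral.integral_congr_ae ?_
      filter_upwards [hae] with x hx hmem
      rw [uIoc_of_le (le_of_lt hcs)] at hmem
      have hxs : ¬ s ≤ x := by
        rcases lt_or_eq_of_le hmem.2 with h | h
        · exact not_le.2 h
        · exact absurd h hx
      rw [hlt_prod x (by intro h; exact hxs h)]
    -- [s,t] part: product is constant
    have hconst : ∀ u, s ≤ u → u ≤ t →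
        (∏ i ∈ F, if τ i ≤ u then 1 + γ i else 1)
          = ∏ i ∈ F, if τ i ≤ t then 1 + γ i else 1 := by
      intro u hsu hut
      refine Finset.prod_congr rfl fun i hi => ?_
      by_cases h : τ i ≤ t
      · rw [if_pos h, if_pos (le_trans (hmax i hi h) hsu)]
      · rw [if_neg h, if_neg (fun hh => h (le_trans hh hut))]
    set Q := ∏ i ∈ F, if τ i ≤ t then 1 + γ i else 1 with hQ
    have hint_st : (∫ u in s..t, a u * wSol a τ v c γ F u)
        = wSol a τ v c γ F t - wSol a τ v c γ F s := by
      have h1 : (∫ u in s..t, a u * wSol a τ v c γ F u)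
          = ∫ u in s..t, (v * Q * Real.exp (∫ x in c..s, a x)) *
              (a u * Real.exp (∫ x in s..u, a x)) := by
        refine integral_congr fun u hu => ?_
        rw [uIcc_of_le hst] at hu
        unfold wSol
        rw [hconst u hu.1 hu.2]
        have hsplit : (∫ x in c..u, a x) = (∫ x in c..s, a x) + ∫ x in s..u, a x :=
          (integral_add_adjacent_intervals (bdd_intInt ha hMa c s) (bdd_intInt ha hMa s u)).symm
        rw [hsplit, Real.exp_add]
        ring
      rw [h1, intervalIntegral.integral_const_mul, expFTC ha hMa hst]
      have hsplit2 : (∫ x in c..t, a x) = (∫ x in c..s, a x) + ∫ x in s..t, a x :=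
        (integral_add_adjacent_intervals (bdd_intInt ha hMa c s) (bdd_intInt ha hMa s t)).symm
      unfold wSol
      rw [hconst s le_rfl hst, hsplit2, Real.exp_add]
      ring
    -- left limit value at istar equals wSol over F' at s
    have hm_istar : v * Real.exp (∫ x in c..s, a x) *
        (∏ j ∈ F, if τ j < s then 1 + γ j else 1) = wSol a τ v c γ F' s := by
      unfold wSol
      congr 1
      rw [← Finset.mul_prod_erase F _ hisF, if_neg (lt_irrefl s), one_mul, ← hF']
      refine Finset.prod_congr rfl fun j hj => ?_
      have hjne : j ≠ istar := Finset.ne_of_mem_erase hj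
      have hτne : τ j ≠ s := fun h => hjne (hτm.injective h)
      by_cases h : τ j ≤ s
      · rw [if_pos (lt_of_le_of_ne h hτne), if_pos h]
      · rw [if_neg (fun hh => h (le_of_lt hh)), if_neg h]
    -- m'_i = m_i for i in F' with τ i ≤ s
    have hm_eq : ∀ i ∈ F', τ i ≤ s →
        (∏ j ∈ F', if τ j < τ i then 1 + γ j else 1)
          = ∏ j ∈ F, if τ j < τ i then 1 + γ j else 1 := by
      intro i hi his
      rw [← Finset.mul_prod_erase F (fun j => if τ j < τ i then 1 + γ j else 1) hisF, ← hF']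
      rw [if_neg (not_lt.2 his), one_mul]
    -- sum splitting
    have hsum : (∑ i ∈ F, (if τ i ≤ t then
          γ i * (v * Real.exp (∫ x in c..(τ i), a x) *
            ∏ j ∈ F, if τ j < τ i then 1 + γ j else 1) else 0))
        = (∑ i ∈ F', (if τ i ≤ s then
            γ i * (v * Real.exp (∫ x in c..(τ i), a x) *
              ∏ j ∈ F', if τ j < τ i then 1 + γ j else 1) else 0))
          + γ istar * wSol a τ v c γ F' s := by
      rw [← Finset.add_sum_erase F _ hisF, ← hF', if_pos hist, hm_istar]
      rw [add_comm]
      congr 1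
      refine Finset.sum_congr rfl fun i hi => ?_
      by_cases h : τ i ≤ s
      · rw [if_pos h, if_pos (le_trans h hst), hm_eq i hi h]
      · rw [if_neg h, if_neg (fun hh => h (hmax i (Finset.mem_of_mem_erase hi) hh))]
    have hats' : wSol a τ v c γ F s = wSol a τ v c γ F' s + γ istar * wSol a τ v c γ F' s := by
      rw [hats]; ring
    have hadj : (∫ u in c..s, a u * wSol a τ v c γ F u) + (∫ u in s..t, a u * wSol a τ v c γ F u)
        = ∫ u in c..t, a u * wSol a τ v c γ F u :=
      integral_add_adjacent_intervals
        (wSol_intInt ha hMa v c γ F (le_refl c) (le_of_lt hcs))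
        (wSol_intInt ha hMa v c γ F (le_of_lt hcs) hst)
    linarith [hint_st, hats', hIH, hint_cs, hsum, hadj]

end Window

noncomputable def Sfun (b : ℝ) (φ f g : ℝ → ℝ) (τ y : ℕ → ℝ) (M₀ : ℕ) : ℕ → ℝ → ℝ
  | 0 => fun t => φ (max (min t 0) (-b))
  | (k+1) => fun t =>
      if t ≤ k * b then Sfun b φ f g τ y M₀ k t
      else
        Sfun b φ f g τ y M₀ k (k * b) *
          Real.exp (∫ u in (k * b)..(min t ((k+1) * b)), f (Sfun b φ f g τ y M₀ k (u - b))) *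
          ∏ i ∈ Finset.range M₀,
            if k * b < τ i ∧ τ i ≤ min t ((k+1) * b)
            then 1 + g (Sfun b φ f g τ y M₀ k (τ i - b)) * y i else 1

section SfunLemmas

variable {b T R α₀ Cf Cφ : ℝ} {φ f g : ℝ → ℝ} {τ y : ℕ → ℝ} {M₀ : ℕ}

lemma Sfun_measurable (hφm : Measurable φ) (hfm : Measurable f) {Cf : ℝ}
    (hfb : ∀ x, |f x| ≤ Cf) : ∀ k, Measurable (Sfun b φ f g τ y M₀ k) := by
  intro k
  induction k with
  | zero =>
    exact hφm.comp ((measurable_id.min measurable_const).max measurable_const)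
  | succ k ih =>
    show Measurable fun t => if t ≤ k * b then _ else _
    refine Measurable.ite measurableSet_Iic ih ?_
    refine Measurable.mul (Measurable.mul measurable_const ?_) ?_
    · refine (Real.measurable_exp).comp ?_
      have hGm : Measurable fun u => f (Sfun b φ f g τ y M₀ k (u - b)) :=
        hfm.comp (ih.comp (measurable_id.sub measurable_const))
      have hGb : ∀ u, |f (Sfun b φ f g τ y M₀ k (u - b))| ≤ Cf := fun u => hfb _
      have hcont : Continuous fun x => ∫ u in (k*b)..x, f (Sfun b φ f g τ y M₀ k (u - b)) :=
        continuous_primitive (bdd_intInt hGm hGb) (k*b)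
      exact (hcont.comp (continuous_id.min continuous_const)).measurable
    · refine Finset.measurable_prod _ fun i _ => ?_
      refine Measurable.ite ?_ measurable_const measurable_const
      have : {t : ℝ | k * b < τ i ∧ τ i ≤ min t ((k+1) * b)}
          = {t : ℝ | k * b < τ i} ∩ {t : ℝ | τ i ≤ min t ((k+1) * b)} := rfl
      rw [this]
      exact (MeasurableSet.const _).inter
        (measurableSet_le measurable_const (measurable_id.min measurable_const))

lemma Sfun_agree (hb : 0 < b) : ∀ (k j : ℕ) (t : ℝ), t ≤ (k : ℝ) * b →
    Sfun b φ f g τ y M₀ (k + j) t = Sfun b φ f g τ y M₀ k t := by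
  intro k j
  induction j with
  | zero => intro t _; rfl
  | succ j ih =>
    intro t ht
    have hkb : t ≤ ((k + j : ℕ) : ℝ) * b := by
      have h1 : ((k:ℝ)) ≤ ((k + j : ℕ) : ℝ) := by exact_mod_cast Nat.le_add_right k j
      have h2 : ((k:ℝ)) * b ≤ ((k + j : ℕ) : ℝ) * b := mul_le_mul_of_nonneg_right h1 hb.le
      linarith
    show (if t ≤ ((k + j : ℕ) : ℝ) * b then _ else _) = _
    rw [if_pos (by exact_mod_cast hkb)]
    exact ih t ht

lemma Sfun_eq_of_le (hb : 0 < b) {k m : ℕ} (hkm : k ≤ m) {t : ℝ} (ht : t ≤ k * b) :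
    Sfun b φ f g τ y M₀ m t = Sfun b φ f g τ y M₀ k t := by
  obtain ⟨j, rfl⟩ := Nat.exists_eq_add_of_le hkm
  exact Sfun_agree hb k j t ht

lemma jump_fac_pos (hR : 0 < R) (hα₀ : 0 < α₀) (hα₁ : α₀ < 1)
    (hg : ∀ x, 0 ≤ g x ∧ g x ≤ α₀ / R) (hy : ∀ i, -R ≤ y i) (x : ℝ) (i : ℕ) :
    1 - α₀ ≤ 1 + g x * y i ∧ 0 < 1 + g x * y i := by
  have hgx := hg x
  rcases le_or_gt 0 (y i) with h | h
  · constructor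
    · nlinarith [mul_nonneg hgx.1 h]
    · nlinarith [mul_nonneg hgx.1 h]
  · have h1 : g x * y i ≥ (α₀ / R) * y i := by
      have := mul_le_mul_of_nonpos_right hgx.2 h.le
      linarith
    have h2 : (α₀ / R) * y i ≥ (α₀ / R) * (-R) := by
      have hdiv : 0 ≤ α₀ / R := div_nonneg hα₀.le hR.le
      exact mul_le_mul_of_nonneg_left (hy i) hdiv
    have h3 : (α₀ / R) * (-R) = -α₀ := by field_simp
    constructor <;> nlinarith

lemma Sfun_pos (hb : 0 < b) (hR : 0 < R) (hα₀ : 0 < α₀) (hα₁ : α₀ < 1) (hφ0 : 0 < φ 0)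
    (hg : ∀ x, 0 ≤ g x ∧ g x ≤ α₀ / R) (hy : ∀ i, -R ≤ y i) :
    ∀ k (t : ℝ), 0 ≤ t → 0 < Sfun b φ f g τ y M₀ k t := by
  intro k
  induction k with
  | zero =>
    intro t ht
    show 0 < φ (max (min t 0) (-b))
    rw [min_eq_right ht, max_eq_left (by linarith : -b ≤ (0:ℝ))]
    exact hφ0
  | succ k ih =>
    intro t ht
    show 0 < if t ≤ k * b then _ else _
    by_cases h : t ≤ k * b
    · rw [if_pos h]; exact ih t ht
    · rw [if_neg h]
      refine mul_pos (mul_pos ?_ (Real.exp_pos _)) ?_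
      · exact ih (k * b) (by positivity)
      · refine Finset.prod_pos fun i _ => ?_
        by_cases hc : k * b < τ i ∧ τ i ≤ min t ((k+1) * b)
        · rw [if_pos hc]
          exact (jump_fac_pos hR hα₀ hα₁ hg hy _ i).2
        · rw [if_neg hc]; exact one_pos

lemma Sfun_bdd (hb : 0 < b) (hφb : ∀ t ∈ Icc (-b) (0:ℝ), |φ t| ≤ Cφ)
    (hfb : ∀ x, |f x| ≤ Cf) :
    ∀ k, ∃ B, 0 ≤ B ∧ ∀ t, |Sfun b φ f g τ y M₀ k t| ≤ B := by
  intro k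
  induction k with
  | zero =>
    refine ⟨Cφ, ?_, ?_⟩
    · exact le_trans (abs_nonneg _) (hφb 0 ⟨by linarith, le_rfl⟩)
    · intro t
      refine hφb _ ⟨le_max_right _ _, ?_⟩
      exact max_le (min_le_right t 0) (by linarith)
  | succ k ih =>
    obtain ⟨B, hB0, hB⟩ := ih
    have hCf0 : 0 ≤ Cf := le_trans (abs_nonneg _) (hfb 0)
    refine ⟨max B (B * Real.exp (Cf * b) *
      ∏ i ∈ Finset.range M₀, max |1 + g (Sfun b φ f g τ y M₀ k (τ i - b)) * y i| 1), ?_, ?_⟩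
    · exact le_trans hB0 (le_max_left _ _)
    · intro t
      show |if t ≤ k * b then _ else _| ≤ _
      by_cases h : t ≤ k * b
      · rw [if_pos h]; exact le_trans (hB t) (le_max_left _ _)
      · rw [if_neg h]
        refine le_trans ?_ (le_max_right _ _)
        push_neg at h
        rw [abs_mul, abs_mul]
        have hprodpos : (0:ℝ) ≤ ∏ i ∈ Finset.range M₀,
            max |1 + g (Sfun b φ f g τ y M₀ k (τ i - b)) * y i| 1 :=
          Finset.prod_nonneg fun i _ => le_trans zero_le_one (le_max_right _ _)
        refine mul_le_mul (mul_le_mul (hB _) ?_ (abs_nonneg _) hB0) ?_ (abs_nonneg _)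
          (by positivity)
        · rw [Real.abs_exp]
          apply Real.exp_le_exp.2
          have hmin : k * b < min t ((k+1) * b) := by
            refine lt_min h ?_
            have : (k:ℝ) * b < (k+1) * b := by nlinarith
            push_cast
            linarith
          have h1 : ‖∫ u in (k*b)..(min t ((k+1) * b)), f (Sfun b φ f g τ y M₀ k (u - b))‖
              ≤ Cf * |min t ((k+1) * b) - k * b| := norm_integral_le_of_norm_le_const
            (C := Cf) (fun z _ => by rw [Real.norm_eq_abs]; exact hfb _)
          rw [Real.norm_eq_abs] at h1
          have h2 : |min t ((k+1) * b) - k * b| ≤ b := by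
            rw [abs_of_nonneg (by linarith)]
            have : min t ((k+1) * b) ≤ (k+1) * b := min_le_right _ _
            push_cast at this ⊢
            linarith
          calc (∫ u in (k*b)..(min t ((k+1) * b)), f (Sfun b φ f g τ y M₀ k (u - b)))
              ≤ |∫ u in (k*b)..(min t ((k+1) * b)), f (Sfun b φ f g τ y M₀ k (u - b))| :=
              le_abs_self _
            _ ≤ Cf * |min t ((k+1) * b) - k * b| := h1
            _ ≤ Cf * b := by nlinarith [abs_nonneg (min t ((k+1) * b) - k * b)]
        · rw [Finset.abs_prod]
          refine Finset.prod_le_prod (fun i _ => abs_nonneg _) fun i _ => ?_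
          by_cases hc : k * b < τ i ∧ τ i ≤ min t ((k+1) * b)
          · rw [if_pos hc]; exact le_max_left _ _
          · rw [if_neg hc]; simp

end SfunLemmas

theorem det_solution
    {b T R α₀ Cf Cφ : ℝ} {φ f g : ℝ → ℝ} {τ y : ℕ → ℝ}
    (hb : 0 < b) (hT : 0 < T) (hR : 0 < R) (hα₀ : 0 < α₀) (hα₁ : α₀ < 1)
    (hφm : Measurable φ) (hφb : ∀ t ∈ Icc (-b) (0:ℝ), |φ t| ≤ Cφ) (hφ0 : 0 < φ 0)
    (hfm : Measurable f) (hfb : ∀ x, |f x| ≤ Cf)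
    (hgm : Measurable g) (hg : ∀ x, 0 ≤ g x ∧ g x ≤ α₀ / R)
    (hτ0 : 0 < τ 0) (hτm : StrictMono τ) (hτtop : Tendsto τ atTop atTop)
    (hy : ∀ i, -R ≤ y i) :
    ∃ S : ℝ → ℝ, Measurable S ∧ IsSolution b T φ f g τ y S ∧
      (∀ t ∈ Icc (0:ℝ) T, 0 < S t) ∧
      (∀ S' : ℝ → ℝ, Measurable S' → IsSolution b T φ f g τ y S' →
        EqOn S' S (Icc (-b) T)) := by
  classical
  have hCf0 : 0 ≤ Cf := le_trans (abs_nonneg _) (hfb 0)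
  set K : ℕ := ⌈T / b⌉₊ with hK
  set M : ℕ := K + 1 with hM
  have hKT : T ≤ (K : ℝ) * b := by
    have h1 : T / b ≤ (K : ℝ) := Nat.le_ceil (T / b)
    rwa [div_le_iff₀ hb] at h1
  have hKM : (K : ℝ) * b ≤ (M : ℝ) * b := by
    have : (K : ℝ) ≤ M := by exact_mod_cast Nat.le_succ K
    nlinarith
  obtain ⟨M₀, hM₀⟩ : ∃ M₀ : ℕ, ∀ i, M₀ ≤ i → (M : ℝ) * b < τ i := by
    obtain ⟨N, hN⟩ := (tendsto_atTop_atTop.1 hτtop) ((M : ℝ) * b + 1)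
    exact ⟨N, fun i hi => by linarith [hN i hi]⟩
  set S : ℝ → ℝ := Sfun b φ f g τ y M₀ M with hS
  have hSmeas : Measurable S := Sfun_measurable hφm hfm hfb M
  obtain ⟨BS, hBS0, hBS⟩ := Sfun_bdd (τ := τ) (y := y) (M₀ := M₀) (g := g) hb hφb hfb M
  have hSpos : ∀ t : ℝ, 0 ≤ t → 0 < S t := fun t ht =>
    Sfun_pos hb hR hα₀ hα₁ hφ0 hg hy M t ht
  -- S agrees with φ on [-b, 0]
  have hφeq : ∀ t ∈ Icc (-b) (0:ℝ), S t = φ t := by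
    intro t ht
    have h0 : S t = Sfun b φ f g τ y M₀ 0 t :=
      Sfun_eq_of_le hb (Nat.zero_le M) (by simpa using ht.2)
    rw [h0]
    show φ (max (min t 0) (-b)) = φ t
    rw [min_eq_left ht.2, max_eq_left ht.1]
  have hS0 : S 0 = φ 0 := hφeq 0 ⟨by linarith, le_rfl⟩
  -- the drift coefficient and jump coefficients
  set a : ℝ → ℝ := fun u => f (S (u - b)) with ha
  have ham : Measurable a := hfm.comp (hSmeas.comp (measurable_id.sub measurable_const))
  have hab : ∀ x, |a x| ≤ Cf := fun x => hfb _
  set γ : ℕ → ℝ := fun i => g (S (τ i - b)) * y i with hγ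
  have hγpos : ∀ i, 1 - α₀ ≤ 1 + γ i ∧ 0 < 1 + γ i := fun i =>
    jump_fac_pos hR hα₀ hα₁ hg hy _ i
  set Sm : ℕ → ℝ := fun i => S (τ i) / (1 + γ i) with hSm
  set h : ℝ → ℝ := fun u => f (S (u - b)) * S u with hh
  have hhm : Measurable h := ham.mul hSmeas
  have hhb : ∀ x, |h x| ≤ Cf * BS := fun x => by
    rw [abs_mul]
    exact mul_le_mul (hfb _) (hBS _) (abs_nonneg _) hCf0
  have hhint : ∀ u v : ℝ, IntervalIntegrable h volume u v := bdd_intInt hhm hhb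
  have hτpos : ∀ i, 0 < τ i := fun i => lt_of_lt_of_le hτ0 (hτm.monotone (Nat.zero_le i))
  have hτbig : ∀ {i t : ℝ → ℝ}, True := fun {i t} => trivial
  have hτM₀ : ∀ i, i < M₀ ∨ T < τ i := by
    intro i
    rcases lt_or_ge i M₀ with hi | hi
    · exact Or.inl hi
    · exact Or.inr (lt_of_le_of_lt (le_trans hKT hKM) (hM₀ i hi))
  -- window form of S
  have hwform : ∀ k : ℕ, k + 1 ≤ M → ∀ t, (k:ℝ) * b < t → t ≤ ((k:ℝ)+1) * b →
      S t = wSol a τ (S ((k:ℝ)*b)) ((k:ℝ)*b) γ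
        ((Finset.range M₀).filter (fun i => (k:ℝ)*b < τ i)) t := by
    intro k hk1M t hkt htk1
    have hst1 : S t = Sfun b φ f g τ y M₀ (k+1) t :=
      Sfun_eq_of_le hb hk1M (by push_cast; linarith)
    rw [hst1]
    show (if t ≤ (k:ℝ) * b then _ else _) = _
    rw [if_neg (not_le.2 hkt)]
    have hmin : min t (((k:ℕ)+1 : ℝ) * b) = t := min_eq_left (by push_cast; linarith)
    have hconsist : ∀ u : ℝ, u ≤ (k:ℝ)*b → Sfun b φ f g τ y M₀ k u = S u :=
      fun u hu => (Sfun_eq_of_le hb (by omega : k ≤ M) hu).symm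
    have hSkb : Sfun b φ f g τ y M₀ k ((k:ℝ)*b) = S ((k:ℝ)*b) := hconsist _ le_rfl
    have hexp : (∫ u in ((k:ℝ)*b)..(min t (((k:ℕ)+1:ℝ) * b)), f (Sfun b φ f g τ y M₀ k (u - b)))
        = ∫ u in ((k:ℝ)*b)..t, a u := by
      rw [hmin]
      refine integral_congr fun u hu => ?_
      rw [uIcc_of_le hkt.le] at hu
      have : u - b ≤ (k:ℝ)*b := by
        have := hu.2
        push_cast at htk1
        linarith
      rw [hconsist _ this]
    have hprod : (∏ i ∈ Finset.range M₀,
        if (k:ℝ) * b < τ i ∧ τ i ≤ min t (((k:ℕ)+1:ℝ) * b)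
        then 1 + g (Sfun b φ f g τ y M₀ k (τ i - b)) * y i else 1)
        = ∏ i ∈ (Finset.range M₀).filter (fun i => (k:ℝ)*b < τ i),
            if τ i ≤ t then 1 + γ i else 1 := by
      rw [Finset.prod_filter]
      refine Finset.prod_congr rfl fun i _ => ?_
      rw [hmin]
      by_cases h1 : (k:ℝ) * b < τ i
      · rw [if_pos h1]
        by_cases h2 : τ i ≤ t
        · rw [if_pos ⟨h1, h2⟩, if_pos h2]
          have : τ i - b ≤ (k:ℝ)*b := by push_cast at htk1; linarith
          rw [hconsist _ this]
        · rw [if_neg (fun hc => h2 hc.2), if_neg h2]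
      · rw [if_neg (fun hc => h1 hc.1), if_neg h1]
    unfold wSol
    rw [hexp, hprod, hSkb]
  -- value of wSol at the left endpoint of a window
  have hwstart : ∀ (v : ℝ) (c : ℝ) (F : Finset ℕ), (∀ i ∈ F, c < τ i) →
      wSol a τ v c γ F c = v := by
    intro v c F hF
    unfold wSol
    rw [intervalIntegral.integral_same, Real.exp_zero,
      Finset.prod_eq_one fun i hi => if_neg (not_le.2 (hF i hi))]
    ring
  -- main equation by induction on windows
  have hmain : ∀ k : ℕ, ∀ t : ℝ, 0 ≤ t → t ≤ T → t ≤ (k:ℝ) * b →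
      S t = φ 0 + (∫ u in (0:ℝ)..t, h u)
        + ∑ i ∈ Finset.range M₀, (if τ i ≤ t then γ i * Sm i else 0) := by
    intro k
    induction k with
    | zero =>
      intro t ht0 htT htk
      have ht : t = 0 := le_antisymm (by simpa using htk) ht0
      subst ht
      rw [intervalIntegral.integral_same, hS0,
        Finset.sum_eq_zero fun i _ => if_neg (not_le.2 (hτpos i))]
      ring
    | succ k ih =>
      intro t ht0 htT htk
      by_cases hkt : t ≤ (k:ℝ) * b
      · exact ih t ht0 htT hkt
      push_neg at hkt
      have htk1 : t ≤ ((k:ℝ)+1) * b := by push_cast at htk; linarith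
      have hkb0 : (0:ℝ) ≤ (k:ℝ) * b := by positivity
      have hkbT : (k:ℝ) * b ≤ T := le_of_lt (lt_of_lt_of_le hkt htT)
      have hkK : k + 1 ≤ M := by
        have h1 : (k:ℝ) * b < (K:ℝ) * b := lt_of_lt_of_le hkt (le_trans htT hKT)
        have h2 : (k:ℝ) < (K:ℝ) := lt_of_mul_lt_mul_right h1 hb.le
        have h3 : k < K := by exact_mod_cast h2
        omega
      set F : Finset ℕ := (Finset.range M₀).filter (fun i => (k:ℝ)*b < τ i) with hF
      have hFτ : ∀ i ∈ F, (k:ℝ)*b < τ i := fun i hi => (Finset.mem_filter.1 hi).2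
      have hweq : ∀ u, (k:ℝ)*b ≤ u → u ≤ t →
          wSol a τ (S ((k:ℝ)*b)) ((k:ℝ)*b) γ F u = S u := by
        intro u h1 h2
        rcases eq_or_lt_of_le h1 with he | hlt
        · rw [← he, hwstart _ _ _ hFτ]
        · exact (hwform k hkK u hlt (le_trans h2 htk1)).symm
      have happly := windowEq hτm ham hab (S ((k:ℝ)*b)) ((k:ℝ)*b) γ
        ((F.filter (fun i => τ i ≤ t)).card) F hFτ t (le_of_lt hkt) rfl
      -- rewrite pieces of happly
      have hintrw : (∫ u in ((k:ℝ)*b)..t, a u * wSol a τ (S ((k:ℝ)*b)) ((k:ℝ)*b) γ F u)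
          = ∫ u in ((k:ℝ)*b)..t, h u := by
        refine integral_congr fun u hu => ?_
        rw [uIcc_of_le (le_of_lt hkt)] at hu
        rw [hweq u hu.1 hu.2]
      have hm_eq : ∀ i ∈ F, τ i ≤ t →
          (S ((k:ℝ)*b)) * Real.exp (∫ x in ((k:ℝ)*b)..(τ i), a x) *
            (∏ j ∈ F, if τ j < τ i then 1 + γ j else 1) = Sm i := by
        intro i hiF hit
        have hSτ : S (τ i) = wSol a τ (S ((k:ℝ)*b)) ((k:ℝ)*b) γ F (τ i) :=
          (hweq (τ i) (le_of_lt (hFτ i hiF)) hit).symm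
        have hprodsplit : (∏ j ∈ F, if τ j ≤ τ i then 1 + γ j else 1)
            = (1 + γ i) * ∏ j ∈ F, if τ j < τ i then 1 + γ j else 1 := by
          rw [← Finset.mul_prod_erase F (fun j => if τ j ≤ τ i then 1 + γ j else 1) hiF,
            ← Finset.mul_prod_erase F (fun j => if τ j < τ i then 1 + γ j else 1) hiF,
            if_pos le_rfl, if_neg (lt_irrefl _)]
          rw [one_mul]
          congr 1
          refine Finset.prod_congr rfl fun j hj => ?_
          have hjne : j ≠ i := Finset.ne_of_mem_erase hj
          have hτne : τ j ≠ τ i := fun hc => hjne (hτm.injective hc)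
          by_cases hc : τ j ≤ τ i
          · rw [if_pos hc, if_pos (lt_of_le_of_ne hc hτne)]
          · rw [if_neg hc, if_neg (fun hcc => hc (le_of_lt hcc))]
        have hSval : S (τ i) = (1 + γ i) *
            ((S ((k:ℝ)*b)) * Real.exp (∫ x in ((k:ℝ)*b)..(τ i), a x) *
              (∏ j ∈ F, if τ j < τ i then 1 + γ j else 1)) := by
          rw [hSτ]; unfold wSol; rw [hprodsplit]; ring
        have hne : (1 + γ i) ≠ 0 := ne_of_gt (hγpos i).2
        rw [hSm]
        simp only
        rw [hSval]
        field_simp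
      have hsumrw : (∑ i ∈ F, (if τ i ≤ t then
            γ i * ((S ((k:ℝ)*b)) * Real.exp (∫ x in ((k:ℝ)*b)..(τ i), a x) *
              ∏ j ∈ F, if τ j < τ i then 1 + γ j else 1) else 0))
          = ∑ i ∈ F, (if τ i ≤ t then γ i * Sm i else 0) := by
        refine Finset.sum_congr rfl fun i hi => ?_
        by_cases hc : τ i ≤ t
        · rw [if_pos hc, if_pos hc, hm_eq i hi hc]
        · rw [if_neg hc, if_neg hc]
      have hwnd : S t = S ((k:ℝ)*b) + (∫ u in ((k:ℝ)*b)..t, h u)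
          + ∑ i ∈ F, (if τ i ≤ t then γ i * Sm i else 0) := by
        rw [← hweq t (le_of_lt hkt) le_rfl, happly, hintrw, hsumrw]
      have hIH := ih ((k:ℝ)*b) hkb0 hkbT le_rfl
      have hadj : (∫ u in (0:ℝ)..((k:ℝ)*b), h u) + (∫ u in ((k:ℝ)*b)..t, h u)
          = ∫ u in (0:ℝ)..t, h u :=
        integral_add_adjacent_intervals (hhint _ _) (hhint _ _)
      have hsums : (∑ i ∈ Finset.range M₀, (if τ i ≤ (k:ℝ)*b then γ i * Sm i else 0))
          + (∑ i ∈ F, (if τ i ≤ t then γ i * Sm i else 0))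
          = ∑ i ∈ Finset.range M₀, (if τ i ≤ t then γ i * Sm i else 0) := by
        rw [hF, Finset.sum_filter, ← Finset.sum_add_distrib]
        refine Finset.sum_congr rfl fun i _ => ?_
        rcases le_or_gt (τ i) ((k:ℝ)*b) with hc | hc
        · rw [if_pos hc, if_neg (not_lt.2 hc), if_pos (le_trans hc (le_of_lt hkt))]
          ring
        · rw [if_neg (not_le.2 hc), if_pos hc]
          ring
      linarith [hwnd, hIH, hadj, hsums]
  -- left limits
  have hSmlim : ∀ i, τ i ≤ T → Tendsto S (nhdsWithin (τ i) (Iio (τ i))) (nhds (Sm i)) := by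
    intro i hiT
    set c : ℕ := ⌈τ i / b⌉₊ with hc
    have hτib : 0 < τ i / b := div_pos (hτpos i) hb
    have hceil1 : 1 ≤ c := Nat.one_le_ceil_iff.2 hτib
    set k : ℕ := c - 1 with hk2
    have hkc : k + 1 = c := by omega
    have hkcast : (k:ℝ) = (c:ℝ) - 1 := by
      have : ((k + 1 : ℕ):ℝ) = (c:ℝ) := by rw [hkc]
      push_cast at this
      linarith
    have hwin1 : (k:ℝ) * b < τ i := by
      have h1 : (c:ℝ) < τ i / b + 1 := Nat.ceil_lt_add_one (le_of_lt hτib)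
      rw [hkcast]
      have h2 : ((c:ℝ) - 1) * b < (τ i / b) * b := by nlinarith
      rwa [div_mul_cancel₀ _ (ne_of_gt hb)] at h2
    have hwin2 : τ i ≤ ((k:ℝ) + 1) * b := by
      have h1 : τ i / b ≤ (c:ℝ) := Nat.le_ceil _
      rw [hkcast]
      have h2 : (τ i / b) * b ≤ (c:ℝ) * b := mul_le_mul_of_nonneg_right h1 hb.le
      rw [div_mul_cancel₀ _ (ne_of_gt hb)] at h2
      nlinarith
    have hk1M : k + 1 ≤ M := by
      have h1 : τ i / b ≤ (K:ℝ) := by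
        rw [div_le_iff₀ hb]; exact le_trans hiT hKT
      have h2 : c ≤ K := Nat.ceil_le.2 h1
      omega
    have hiM₀ : i ∈ Finset.range M₀ := by
      rcases hτM₀ i with h1 | h1
      · exact Finset.mem_range.2 h1
      · exact absurd hiT (not_le.2 h1)
    set F : Finset ℕ := (Finset.range M₀).filter (fun j => (k:ℝ)*b < τ j) with hF
    have hiF : i ∈ F := Finset.mem_filter.2 ⟨hiM₀, hwin1⟩
    set p : ℝ := max ((k:ℝ)*b) (if i = 0 then (k:ℝ)*b else τ (i-1)) with hp
    have hkbp : (k:ℝ)*b ≤ p := le_max_left _ _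
    have hp_lt : p < τ i := by
      refine max_lt hwin1 ?_
      by_cases hi0 : i = 0
      · rw [if_pos hi0]; exact hwin1
      · rw [if_neg hi0]
        exact hτm (Nat.sub_lt (Nat.pos_of_ne_zero hi0) one_pos)
    set Cp : ℝ := ∏ j ∈ F, if τ j < τ i then 1 + γ j else 1 with hCp
    have hconstprod : ∀ u, p < u → u < τ i →
        (∏ j ∈ F, if τ j ≤ u then 1 + γ j else 1) = Cp := by
      intro u hpu huτ
      refine Finset.prod_congr rfl fun j hj => ?_
      by_cases hcj : τ j < τ i
      · have hji : j < i := hτm.lt_iff_lt.1 hcj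
        have hi0 : i ≠ 0 := by omega
        have hji' : j ≤ i - 1 := by omega
        have hτj : τ j ≤ τ (i-1) := hτm.monotone hji'
        have hτju : τ j ≤ u := by
          have : τ (i-1) ≤ p := by rw [hp, if_neg hi0]; exact le_max_right _ _
          linarith
        rw [if_pos hτju, if_pos hcj]
      · have : ¬ τ j ≤ u := by
          push_neg at hcj ⊢
          linarith
        rw [if_neg this, if_neg hcj]
    have hSu : ∀ u, p < u → u < τ i →
        S u = S ((k:ℝ)*b) * Real.exp (∫ x in ((k:ℝ)*b)..u, a x) * Cp := by
      intro u hpu huτ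
      rw [hwform k hk1M u (lt_of_le_of_lt hkbp hpu) (le_trans huτ.le hwin2)]
      unfold wSol
      rw [hconstprod u hpu huτ]
    have hcont : Continuous fun u : ℝ =>
        S ((k:ℝ)*b) * Real.exp (∫ x in ((k:ℝ)*b)..u, a x) * Cp :=
      (continuous_const.mul (Real.continuous_exp.comp
        (continuous_primitive (bdd_intInt ham hab) _))).mul continuous_const
    have hlim0 : Tendsto (fun u : ℝ => S ((k:ℝ)*b) * Real.exp (∫ x in ((k:ℝ)*b)..u, a x) * Cp)
        (nhdsWithin (τ i) (Iio (τ i)))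
        (nhds (S ((k:ℝ)*b) * Real.exp (∫ x in ((k:ℝ)*b)..(τ i), a x) * Cp)) :=
      (hcont.tendsto (τ i)).mono_left nhdsWithin_le_nhds
    have hev : (fun u : ℝ => S ((k:ℝ)*b) * Real.exp (∫ x in ((k:ℝ)*b)..u, a x) * Cp)
        =ᶠ[nhdsWithin (τ i) (Iio (τ i))] S := by
      filter_upwards [Ioo_mem_nhdsLT_of_mem (⟨hp_lt, le_rfl⟩ : τ i ∈ Ioc p (τ i))] with u hu
      exact (hSu u hu.1 hu.2).symm
    have hSmval : Sm i = S ((k:ℝ)*b) * Real.exp (∫ x in ((k:ℝ)*b)..(τ i), a x) * Cp := by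
      have hSτ : S (τ i) = wSol a τ (S ((k:ℝ)*b)) ((k:ℝ)*b) γ F (τ i) :=
        hwform k hk1M (τ i) hwin1 hwin2
      have hprodsplit : (∏ j ∈ F, if τ j ≤ τ i then 1 + γ j else 1) = (1 + γ i) * Cp := by
        rw [hCp, ← Finset.mul_prod_erase F (fun j => if τ j ≤ τ i then 1 + γ j else 1) hiF,
          ← Finset.mul_prod_erase F (fun j => if τ j < τ i then 1 + γ j else 1) hiF,
          if_pos le_rfl, if_neg (lt_irrefl _), one_mul]
        congr 1
        refine Finset.prod_congr rfl fun j hj => ?_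
        have hjne : j ≠ i := Finset.ne_of_mem_erase hj
        have hτne : τ j ≠ τ i := fun hcc => hjne (hτm.injective hcc)
        by_cases hcc : τ j ≤ τ i
        · rw [if_pos hcc, if_pos (lt_of_le_of_ne hcc hτne)]
        · rw [if_neg hcc, if_neg (fun h3 => hcc (le_of_lt h3))]
      have hSval : S (τ i) = (1 + γ i) *
          (S ((k:ℝ)*b) * Real.exp (∫ x in ((k:ℝ)*b)..(τ i), a x) * Cp) := by
        rw [hSτ]; unfold wSol; rw [hprodsplit]; ring
      have hne0 : (1 + γ i) ≠ 0 := ne_of_gt (hγpos i).2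
      rw [hSm]
      simp only
      rw [hSval]
      field_simp
    rw [hSmval]
    exact Tendsto.congr' hev hlim0
  -- tsum form of the jump sum
  have htsum : ∀ (Z : ℕ → ℝ) (t : ℝ), t ≤ T →
      (∑' i : ℕ, if τ i ≤ t then Z i else 0) = ∑ i ∈ Finset.range M₀, (if τ i ≤ t then Z i else 0) := by
    intro Z t htT
    refine tsum_eq_sum fun i hi => ?_
    rw [Finset.mem_range, not_lt] at hi
    exact if_neg (not_le.2 (lt_of_le_of_lt htT (lt_of_le_of_lt (le_trans hKT hKM) (hM₀ i hi))))
  refine ⟨S, hSmeas, ⟨hφeq, Sm, hSmlim, ?_⟩, fun t ht => hSpos t ht.1, ?_⟩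
  · -- the equation
    intro t ht
    have heq := hmain K t ht.1 ht.2 (le_trans ht.2 hKT)
    rw [htsum _ t ht.2]
    simp only [hh, hγ] at heq
    exact heq
  · -- uniqueness
    intro S' hm' hsol'
    obtain ⟨hφ', Sm', hSm'lim, heq'⟩ := hsol'
    set h' : ℝ → ℝ := fun u => f (S' (u - b)) * S' u with hh'
    have hh'm : Measurable h' :=
      (hfm.comp (hm'.comp (measurable_id.sub measurable_const))).mul hm'
    set CJ' : ℝ := ∑ i ∈ Finset.range M₀, |g (S' (τ i - b)) * y i * Sm' i| with hCJ'
    have hCJ'0 : 0 ≤ CJ' := Finset.sum_nonneg fun i _ => abs_nonneg _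
    have hJ'bd : ∀ t : ℝ, t ≤ T →
        |∑' i : ℕ, if τ i ≤ t then g (S' (τ i - b)) * y i * Sm' i else 0| ≤ CJ' := by
      intro t htT
      rw [htsum _ t htT]
      refine le_trans (Finset.abs_sum_le_sum_abs _ _) (Finset.sum_le_sum fun i _ => ?_)
      by_cases hcc : τ i ≤ t
      · rw [if_pos hcc]
      · rw [if_neg hcc]; simp; positivity
    have hkey : ∀ t ∈ Icc (0:ℝ) T, S' t = S t := by
      by_contra hcon
      push_neg at hcon
      obtain ⟨t₁, ht₁, hne1⟩ := hcon
      set Z : Set ℝ := {z | z ∈ Icc (0:ℝ) T ∧ S' z ≠ S z} with hZ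
      have hZne : Z.Nonempty := ⟨t₁, ht₁, hne1⟩
      have hZbdd : BddBelow Z := ⟨0, fun z hz => hz.1.1⟩
      set t0 : ℝ := sInf Z with ht0d
      have ht00 : 0 ≤ t0 := le_csInf hZne fun z hz => hz.1.1
      have ht0z : ∀ z ∈ Z, t0 ≤ z := fun z hz => csInf_le hZbdd hz
      have ht0T : t0 ≤ T := le_trans (ht0z t₁ ⟨ht₁, hne1⟩) ht₁.2
      have hbelow : ∀ u, -b ≤ u → u < t0 → S' u = S u := by
        intro u hu hut
        rcases le_or_gt u 0 with hcc | hcc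
        · rw [hφ' u ⟨hu, hcc⟩, hφeq u ⟨hu, hcc⟩]
        · have hnZ : u ∉ Z := notMem_of_lt_csInf hut hZbdd
          rw [hZ] at hnZ
          simp only [mem_setOf_eq, not_and, not_not] at hnZ
          exact hnZ ⟨hcc.le, le_trans hut.le ht0T⟩
      have hSm_eq : ∀ i, τ i ≤ t0 → Sm' i = Sm i := by
        intro i hi
        have hiT := le_trans hi ht0T
        have h1 := hSm'lim i hiT
        have h2 := hSmlim i hiT
        have hev : S' =ᶠ[nhdsWithin (τ i) (Iio (τ i))] S := by
          have hlo : max (-b) (τ i - 1) < τ i :=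
            max_lt (by linarith [hτpos i]) (by linarith)
          filter_upwards [Ioo_mem_nhdsLT_of_mem
            (⟨hlo, le_rfl⟩ : τ i ∈ Ioc (max (-b) (τ i - 1)) (τ i))] with u hu
          exact hbelow u (le_trans (le_max_left _ _) hu.1.le) (lt_of_lt_of_le hu.2 hi)
        exact tendsto_nhds_unique (Tendsto.congr' hev h1) h2
      have hJeq : ∀ t : ℝ, t ≤ T → (∀ i, τ i ≤ t → τ i ≤ t0) →
          (∑' i : ℕ, if τ i ≤ t then g (S' (τ i - b)) * y i * Sm' i else 0)
            = ∑ i ∈ Finset.range M₀, (if τ i ≤ t then γ i * Sm i else 0) := by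
        intro t hT' hjump
        rw [htsum _ t hT']
        refine Finset.sum_congr rfl fun i _ => ?_
        by_cases hcc : τ i ≤ t
        · rw [if_pos hcc, if_pos hcc]
          have hi0 : τ i ≤ t0 := hjump i hcc
          have hb1 : S' (τ i - b) = S (τ i - b) :=
            hbelow _ (by linarith [hτpos i]) (by linarith [hb])
          rw [hb1, hSm_eq i hi0, hγ]
        · rw [if_neg hcc, if_neg hcc]
      have haept : ∀ z : ℝ, ∀ᵐ x : ℝ, x ≠ z := by
        intro z
        rw [ae_iff]
        simpa [not_not, setOf_eq_eq_singleton] using measure_singleton (μ := volume) z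
      have ht0eq : S' t0 = S t0 := by
        have hA := heq' t0 ⟨ht00, ht0T⟩
        have hBt := hmain K t0 ht00 ht0T (le_trans ht0T hKT)
        have hIeq : (∫ u in (0:ℝ)..t0, f (S' (u - b)) * S' u) = ∫ u in (0:ℝ)..t0, h u := by
          refine intervalIntegral.integral_congr_ae ?_
          filter_upwards [haept t0] with x hx hmem
          rw [uIoc_of_le ht00] at hmem
          have hxlt : x < t0 := lt_of_le_of_ne hmem.2 hx
          have h1 : S' (x - b) = S (x - b) := hbelow _ (by linarith [hmem.1]) (by linarith)
          have h2 : S' x = S x := hbelow _ (by linarith [hmem.1]) hxlt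
          rw [hh]
          simp only
          rw [h1, h2]
        have hJ := hJeq t0 ht0T (fun i hi => hi)
        rw [hIeq, hJ] at hA
        rw [hA, hBt]
      have hbelow' : ∀ u, -b ≤ u → u ≤ t0 → S' u = S u := by
        intro u hu huc
        rcases lt_or_eq_of_le huc with hcc | hcc
        · exact hbelow u hu hcc
        · rw [hcc]; exact ht0eq
      have ht0ltT : t0 < T := by
        rcases lt_or_eq_of_le ht0T with hcc | hcc
        · exact hcc
        · exfalso
          obtain ⟨z, hz⟩ := hZne
          have hzt0 : z = t0 := le_antisymm (hcc ▸ hz.1.2) (ht0z z hz)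
          exact hz.2 (hzt0 ▸ ht0eq)
      obtain ⟨ε, hε0, hεb, hεjump⟩ : ∃ ε > 0, ε ≤ b ∧ ∀ i, τ i ≤ t0 + ε → τ i ≤ t0 := by
        have hAne : {n : ℕ | t0 < τ n}.Nonempty :=
          ⟨M₀, lt_of_le_of_lt (le_trans ht0T (le_trans hKT hKM)) (hM₀ M₀ le_rfl)⟩
        have hn₁mem : t0 < τ (sInf {n : ℕ | t0 < τ n}) := Nat.sInf_mem hAne
        set n₁ := sInf {n : ℕ | t0 < τ n} with hn₁
        refine ⟨min b ((τ n₁ - t0)/2), lt_min hb (by linarith), min_le_left _ _, ?_⟩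
        intro i hi
        by_contra hcon2
        push_neg at hcon2
        have hin : n₁ ≤ i := Nat.sInf_le hcon2
        have hττ : τ n₁ ≤ τ i := hτm.monotone hin
        have hmin2 : min b ((τ n₁ - t0)/2) ≤ (τ n₁ - t0)/2 := min_le_right _ _
        linarith
      set t1 : ℝ := min (t0 + ε) T with ht1d
      have ht01 : t0 < t1 := lt_min (by linarith) ht0ltT
      have ht1T : t1 ≤ T := min_le_right _ _
      have ht1ε : t1 ≤ t0 + ε := min_le_left _ _
      have ht1b : t1 - b ≤ t0 := by linarith
      have hjump1 : ∀ t : ℝ, t ≤ t1 → ∀ i, τ i ≤ t → τ i ≤ t0 :=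
        fun t h1 i h2 => hεjump i (by linarith)
      -- the Grönwall subroutine
      have hgron : ∀ s₁, t0 ≤ s₁ → s₁ ≤ t1 → IntervalIntegrable h' volume 0 s₁ →
          ∀ t ∈ Icc t0 s₁, S' t = S t := by
        intro s₁ hs₁0 hs₁1 hint'
        have hs₁T : s₁ ≤ T := le_trans hs₁1 ht1T
        have hs₁0' : (0:ℝ) ≤ s₁ := le_trans ht00 hs₁0
        have habs' : IntervalIntegrable (fun u => |h' u|) volume 0 s₁ := hint'.abs
        have hsub : ∀ t ∈ Icc t0 s₁, IntervalIntegrable h' volume 0 t := by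
          intro t htm
          refine hint'.mono_set ?_
          rw [uIcc_of_le (le_trans ht00 htm.1), uIcc_of_le hs₁0']
          exact Icc_subset_Icc le_rfl htm.2
        set K1 : ℝ := |φ 0| + (∫ u in (0:ℝ)..s₁, |h' u|) + CJ' with hK1
        have hS'bd : ∀ t ∈ Icc t0 s₁, |S' t| ≤ K1 := by
          intro t htm
          have h0t : (0:ℝ) ≤ t := le_trans ht00 htm.1
          have htT' : t ≤ T := le_trans htm.2 hs₁T
          have hA := heq' t ⟨h0t, htT'⟩
          rw [hA]
          have hi1 : |∫ u in (0:ℝ)..t, f (S' (u - b)) * S' u| ≤ ∫ u in (0:ℝ)..s₁, |h' u| := by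
            have e1 : |∫ u in (0:ℝ)..t, h' u| ≤ ∫ u in (0:ℝ)..t, |h' u| :=
              abs_integral_le_integral_abs h0t
            have e2 : (∫ u in (0:ℝ)..t, |h' u|) ≤ ∫ u in (0:ℝ)..s₁, |h' u| := by
              have hmono1 : IntervalIntegrable (fun u => |h' u|) volume 0 t :=
                (hsub t htm).abs
              have hmono2 : IntervalIntegrable (fun u => |h' u|) volume t s₁ := by
                refine habs'.mono_set ?_
                rw [uIcc_of_le htm.2, uIcc_of_le hs₁0']
                exact Icc_subset_Icc h0t le_rfl
              rw [← integral_add_adjacent_intervals hmono1 hmono2]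
              have : 0 ≤ ∫ u in t..s₁, |h' u| := integral_nonneg htm.2 fun x _ => abs_nonneg _
              linarith
            exact le_trans e1 e2
          calc |φ 0 + (∫ u in (0:ℝ)..t, f (S' (u - b)) * S' u)
              + ∑' i : ℕ, if τ i ≤ t then g (S' (τ i - b)) * y i * Sm' i else 0|
              ≤ |φ 0| + |∫ u in (0:ℝ)..t, f (S' (u - b)) * S' u|
                + |∑' i : ℕ, if τ i ≤ t then g (S' (τ i - b)) * y i * Sm' i else 0| :=
              abs_add_three _ _ _
            _ ≤ K1 := by
              rw [hK1]
              have := hJ'bd t htT'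
              linarith [hi1]
        have hDbd : ∀ t ∈ Icc t0 s₁, |S' t - S t| ≤ K1 + BS := by
          intro t htm
          calc |S' t - S t| ≤ |S' t| + |S t| := abs_sub _ _
            _ ≤ K1 + BS := add_le_add (hS'bd t htm) (hBS t)
        have hineq : ∀ t ∈ Icc t0 s₁, |S' t - S t| ≤ Cf * ∫ x in t0..t, |S' x - S x| := by
          intro t htm
          have h0t : (0:ℝ) ≤ t := le_trans ht00 htm.1
          have htT' : t ≤ T := le_trans htm.2 hs₁T
          have hA := heq' t ⟨h0t, htT'⟩
          have hBt := hmain K t h0t htT' (le_trans htT' hKT)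
          have hJ := hJeq t htT' (hjump1 t (le_trans htm.2 hs₁1))
          rw [hJ] at hA
          have hsplit' : (∫ u in (0:ℝ)..t, f (S' (u - b)) * S' u)
              = (∫ u in (0:ℝ)..t0, h' u) + ∫ u in t0..t, h' u := by
            rw [integral_add_adjacent_intervals (hsub t0 ⟨le_rfl, hs₁0⟩) ?_]
            refine hint'.mono_set ?_
            rw [uIcc_of_le htm.1, uIcc_of_le hs₁0']
            exact Icc_subset_Icc ht00 htm.2
          have hsplitS : (∫ u in (0:ℝ)..t, h u)
              = (∫ u in (0:ℝ)..t0, h u) + ∫ u in t0..t, h u :=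
            (integral_add_adjacent_intervals (hhint _ _) (hhint _ _)).symm
          have h00 : (∫ u in (0:ℝ)..t0, h' u) = ∫ u in (0:ℝ)..t0, h u := by
            refine integral_congr fun x hx => ?_
            rw [uIcc_of_le ht00] at hx
            have h1 : S' (x - b) = S (x - b) := hbelow' _ (by linarith [hx.1]) (by linarith [hx.2])
            have h2 : S' x = S x := hbelow' _ (by linarith [hx.1]) hx.2
            rw [hh', hh]
            simp only
            rw [h1, h2]
          have hD : S' t - S t = ∫ u in t0..t, (h' u - h u) := by
            rw [integral_sub ?_ (hhint _ _)]
            · rw [hA, hBt]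
              rw [hsplit', hsplitS, h00]
              ring
            · refine hint'.mono_set ?_
              rw [uIcc_of_le htm.1, uIcc_of_le hs₁0']
              exact Icc_subset_Icc ht00 htm.2
          have hptw : ∀ x ∈ Icc t0 t, |h' x - h x| ≤ Cf * |S' x - S x| := by
            intro x hx
            have hxb : S' (x - b) = S (x - b) := by
              refine hbelow' _ (by linarith [le_trans ht00 hx.1]) ?_
              have : x ≤ t1 := le_trans hx.2 (le_trans htm.2 hs₁1)
              linarith
            rw [hh', hh]
            simp only
            rw [hxb]
            have : f (S (x - b)) * S' x - f (S (x - b)) * S x = f (S (x - b)) * (S' x - S x) := by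
              ring
            rw [this, abs_mul]
            exact mul_le_mul_of_nonneg_right (hfb _) (abs_nonneg _)
          calc |S' t - S t| = |∫ u in t0..t, (h' u - h u)| := by rw [hD]
            _ ≤ ∫ u in t0..t, |h' u - h u| := abs_integral_le_integral_abs htm.1
            _ ≤ ∫ x in t0..t, Cf * |S' x - S x| := by
                refine integral_mono_on htm.1 ?_ ?_ hptw
                · refine IntervalIntegrable.abs (IntervalIntegrable.sub ?_ (hhint _ _))
                  refine hint'.mono_set ?_
                  rw [uIcc_of_le htm.1, uIcc_of_le hs₁0']
                  exact Icc_subset_Icc ht00 htm.2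
                · refine IntervalIntegrable.const_mul ?_ _
                  refine bdd_intInt_on ((hm'.sub hSmeas).abs) (C := K1 + BS) ?_
                  intro x hx
                  rw [uIcc_of_le htm.1] at hx
                  rw [abs_abs]
                  exact hDbd x ⟨hx.1, le_trans hx.2 htm.2⟩
            _ = Cf * ∫ x in t0..t, |S' x - S x| := intervalIntegral.integral_const_mul _ _
        have hgr := gronwall0 (u := fun x => |S' x - S x|) ((hm'.sub hSmeas).abs)
          (s := t0) (c := s₁) (C := Cf) hCf0 (fun t _ => abs_nonneg _) hDbd hineq
        intro t htm
        have h1 := hgr t htm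
        have h2 := abs_nonneg (S' t - S t)
        have h3 : |S' t - S t| = 0 := le_antisymm h1 h2
        have h4 := abs_eq_zero.1 h3
        linarith [h4]
      -- bootstrapping integrability via the lower Lebesgue integral
      set ψ : ℝ → ENNReal := fun t => ∫⁻ u in Ioc (0:ℝ) t, ‖h' u‖₊ ∂volume with hψd
      have hψiff : ∀ t : ℝ, 0 ≤ t → (IntervalIntegrable h' volume 0 t ↔ ψ t < ⊤) := by
        intro t h0
        rw [intervalIntegrable_iff, uIoc_of_le h0]
        constructor
        · intro h1
          exact (hasFiniteIntegral_def _ _).1 h1.2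
        · intro h1
          exact ⟨hh'm.aestronglyMeasurable.restrict, (hasFiniteIntegral_def _ _).2 h1⟩
      have hψt0 : ψ t0 < ⊤ := by
        have hcong : ψ t0 = ∫⁻ u in Ioc (0:ℝ) t0, ‖h u‖₊ ∂volume := by
          refine setLIntegral_congr_fun_ae measurableSet_Ioc (ae_of_all _ fun x hx => ?_)
          have h1 : S' (x - b) = S (x - b) := hbelow' _ (by linarith [hx.1]) (by linarith [hx.2])
          have h2 : S' x = S x := hbelow' _ (by linarith [hx.1]) hx.2
          rw [hh', hh]
          simp only
          rw [h1, h2]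
        rw [hcong]
        calc (∫⁻ u in Ioc (0:ℝ) t0, ‖h u‖₊ ∂volume)
            ≤ ∫⁻ _ in Ioc (0:ℝ) t0, ENNReal.ofReal (Cf * BS) ∂volume := by
              refine setLIntegral_mono measurable_const fun x _ => ?_
              rw [← enorm_eq_nnnorm, Real.enorm_eq_ofReal_abs]
              exact ENNReal.ofReal_le_ofReal (hhb x)
          _ = ENNReal.ofReal (Cf * BS) * volume (Ioc (0:ℝ) t0) := setLIntegral_const _ _
          _ < ⊤ := ENNReal.mul_lt_top ENNReal.ofReal_lt_top measure_Ioc_lt_top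
      set W : Set ℝ := {s₂ | s₂ ∈ Icc t0 t1 ∧ ψ s₂ < ⊤} with hWd
      have hWt0 : t0 ∈ W := ⟨⟨le_rfl, ht01.le⟩, hψt0⟩
      have hWne : W.Nonempty := ⟨t0, hWt0⟩
      have hWbdd : BddAbove W := ⟨t1, fun z hz => hz.1.2⟩
      set c' : ℝ := sSup W with hc'd
      have hc'0 : t0 ≤ c' := le_csSup hWbdd hWt0
      have hc'1 : c' ≤ t1 := csSup_le hWne fun z hz => hz.1.2
      have hWeq : ∀ s₂ ∈ W, ∀ t ∈ Icc t0 s₂, S' t = S t := fun s₂ hs₂ t htm =>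
        hgron s₂ hs₂.1.1 hs₂.1.2 ((hψiff s₂ (le_trans ht00 hs₂.1.1)).2 hs₂.2) t htm
      have hh'lt : ∀ u, 0 < u → u < c' → h' u = h u := by
        intro u h0u huc
        obtain ⟨s₂, hs₂W, hus₂⟩ := exists_lt_of_lt_csSup hWne huc
        have hueq : S' u = S u := by
          rcases le_or_gt t0 u with hcc | hcc
          · exact hWeq s₂ hs₂W u ⟨hcc, hus₂.le⟩
          · exact hbelow u (by linarith) hcc
        have hub : S' (u - b) = S (u - b) := by
          refine hbelow' _ (by linarith) ?_
          have h1 : u < t1 := lt_of_lt_of_le huc hc'1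
          linarith
        rw [hh', hh]
        simp only
        rw [hueq, hub]
      have hψc' : ψ c' < ⊤ := by
        have hcong : ψ c' = ∫⁻ u in Ioc (0:ℝ) c', ‖h u‖₊ ∂volume := by
          refine setLIntegral_congr_fun_ae measurableSet_Ioc ?_
          filter_upwards [haept c'] with x hx hmem
          rw [hh'lt x hmem.1 (lt_of_le_of_ne hmem.2 hx)]
        rw [hcong]
        calc (∫⁻ u in Ioc (0:ℝ) c', ‖h u‖₊ ∂volume)
            ≤ ∫⁻ _ in Ioc (0:ℝ) c', ENNReal.ofReal (Cf * BS) ∂volume := by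
              refine setLIntegral_mono measurable_const fun x _ => ?_
              rw [← enorm_eq_nnnorm, Real.enorm_eq_ofReal_abs]
              exact ENNReal.ofReal_le_ofReal (hhb x)
          _ = ENNReal.ofReal (Cf * BS) * volume (Ioc (0:ℝ) c') := setLIntegral_const _ _
          _ < ⊤ := ENNReal.mul_lt_top ENNReal.ofReal_lt_top measure_Ioc_lt_top
      have hc'W : c' ∈ W := ⟨⟨hc'0, hc'1⟩, hψc'⟩
      have hc'eq : c' = t1 := by
        by_contra hne2
        have hc'lt : c' < t1 := lt_of_le_of_ne hc'1 hne2
        have hout : ∀ u, c' < u → u ≤ t1 → ψ u = ⊤ := by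
          intro u h1 h2
          by_contra h3
          have hmem : u ∈ W := ⟨⟨le_trans hc'0 h1.le, h2⟩, lt_top_iff_ne_top.2 h3⟩
          have := le_csSup hWbdd hmem
          linarith
        have hbd2 : ∀ u, c' < u → u ≤ t1 → |h' u| ≤ Cf * (|φ 0| + CJ') := by
          intro u h1 h2
          have h0u : (0:ℝ) ≤ u := le_trans (le_trans ht00 hc'0) h1.le
          have huT : u ≤ T := le_trans h2 ht1T
          have hnint : ¬ IntervalIntegrable h' volume 0 u := by
            intro hcon3
            rw [hψiff u h0u, hout u h1 h2] at hcon3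
            exact absurd hcon3 (lt_irrefl _)
          have hA := heq' u ⟨h0u, huT⟩
          rw [intervalIntegral.integral_undef hnint] at hA
          have hb1 : |S' u| ≤ |φ 0| + CJ' := by
            rw [hA]
            calc |φ 0 + 0 + ∑' i : ℕ, if τ i ≤ u then g (S' (τ i - b)) * y i * Sm' i else 0|
                ≤ |φ 0 + 0| + |∑' i : ℕ, if τ i ≤ u then g (S' (τ i - b)) * y i * Sm' i else 0| :=
                abs_add_le _ _
              _ ≤ |φ 0| + CJ' := by
                  rw [add_zero]
                  exact add_le_add le_rfl (hJ'bd u huT)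
          rw [hh']
          simp only
          rw [abs_mul]
          exact mul_le_mul (hfb _) hb1 (abs_nonneg _) hCf0
        have hψt1 : ψ t1 < ⊤ := by
          have hsplit : Ioc (0:ℝ) t1 = Ioc 0 c' ∪ Ioc c' t1 :=
            (Ioc_union_Ioc_eq_Ioc (le_trans ht00 hc'0) hc'1).symm
          rw [hψd]
          simp only
          rw [hsplit, lintegral_union measurableSet_Ioc (Ioc_disjoint_Ioc_of_le le_rfl)]
          have hpart2 : (∫⁻ u in Ioc c' t1, ‖h' u‖₊ ∂volume)
              ≤ ENNReal.ofReal (Cf * (|φ 0| + CJ')) * volume (Ioc c' t1) := by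
            rw [← setLIntegral_const (Ioc c' t1) (ENNReal.ofReal (Cf * (|φ 0| + CJ')))]
            refine setLIntegral_mono measurable_const fun x hx => ?_
            rw [← enorm_eq_nnnorm, Real.enorm_eq_ofReal_abs]
            exact ENNReal.ofReal_le_ofReal (hbd2 x hx.1 hx.2)
          refine ENNReal.add_lt_top.2 ⟨hψc', lt_of_le_of_lt hpart2 ?_⟩
          exact ENNReal.mul_lt_top ENNReal.ofReal_lt_top measure_Ioc_lt_top
        have hmem : t1 ∈ W := ⟨⟨ht01.le, le_rfl⟩, hψt1⟩
        have := le_csSup hWbdd hmem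
        linarith
      have heqt1 : ∀ t ∈ Icc t0 t1, S' t = S t := by
        intro t htm
        exact hWeq t1 (hc'eq ▸ hc'W) t htm
      have hlb : ∀ z ∈ Z, t1 ≤ z := by
        intro z hz
        by_contra h3
        push_neg at h3
        rcases lt_or_ge z t0 with h4 | h4
        · exact hz.2 (hbelow z (by linarith [hz.1.1]) h4)
        · exact hz.2 (heqt1 z ⟨h4, h3.le⟩)
      have hfin := le_csInf hZne hlb
      rw [← ht0d] at hfin
      linarith
    intro x hx
    rcases le_or_gt x 0 with hcc | hcc
    · rw [hφ' x ⟨hx.1, hcc⟩, hφeq x ⟨hx.1, hcc⟩]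
    · exact hkey x ⟨hcc.le, hx.2⟩

/-- Almost sure existence, uniqueness and positivity of the solution of the delayed
jump equation driven by the compound Poisson process `Z(t) = ∑_{i ≤ N_t} Y_i`. -/
theorem stmt_2 {Ω : Type*} [MeasurableSpace Ω] (P : Measure Ω) [IsProbabilityMeasure P]
    (lam R T b α₀ : ℝ) (hlam : 0 < lam) (hR : 0 < R) (hT : 0 < T) (hb : 0 < b)
    (hα₀ : 0 < α₀) (hα₁ : α₀ < 1)
    (E Y : ℕ → Ω → ℝ)
    (hEmeas : ∀ i, Measurable (E i)) (hYmeas : ∀ i, Measurable (Y i))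
    (hindep : iIndepFun (Sum.elim E Y) P)
    (hE : ∀ i, Measure.map (E i) P
      = (volume : Measure ℝ).withDensity
          (fun x => ENNReal.ofReal (if 0 ≤ x then lam * Real.exp (-(lam * x)) else 0)))
    (fY : ℝ → ℝ) (hfYmeas : Measurable fY) (hfYpos : ∀ z, 0 ≤ fY z)
    (hfYint : (∫ z, fY z) = 1) (hfYsupp : ∀ z < -R, fY z = 0)
    (hY : ∀ i, Measure.map (Y i) P
      = (volume : Measure ℝ).withDensity (fun z => ENNReal.ofReal (fY z)))
    (φ f g : ℝ → ℝ) (hφm : Measurable φ)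
    (hφb : ∃ C, ∀ t ∈ Set.Icc (-b) (0 : ℝ), |φ t| ≤ C) (hφ0 : 0 < φ 0)
    (hfm : Measurable f) (hfb : ∃ C, ∀ x, |f x| ≤ C)
    (hgm : Measurable g) (hgb : ∀ x, 0 ≤ g x ∧ g x ≤ α₀ / R) :
    ∀ᵐ ω ∂P, ∃ S : ℝ → ℝ,
      (Measurable S ∧
        IsSolution b T φ f g (fun i => ∑ j ∈ Finset.range (i + 1), E j ω)
          (fun i => Y i ω) S) ∧
      (∀ t ∈ Set.Icc (0 : ℝ) T, 0 < S t) ∧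
      (∀ S' : ℝ → ℝ, Measurable S' →
        IsSolution b T φ f g (fun i => ∑ j ∈ Finset.range (i + 1), E j ω)
          (fun i => Y i ω) S' →
        Set.EqOn S' S (Set.Icc (-b) T)) := by
  classical
  obtain ⟨Cφ, hφb'⟩ := hφb
  obtain ⟨Cf, hfb'⟩ := hfb
  set dens : ℝ → ENNReal :=
    fun x => ENNReal.ofReal (if 0 ≤ x then lam * Real.exp (-(lam * x)) else 0) with hdens
  have hzero : ∀ (s : Set ℝ), MeasurableSet s → ∀ (F : ℝ → ENNReal), (∀ x ∈ s, F x = 0) →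
      ∫⁻ x in s, F x ∂volume = 0 := by
    intro s hs F hF
    rw [setLIntegral_congr_fun_ae (g := fun _ => 0) hs (ae_of_all _ hF)]
    simp
  have hdens0 : ∀ x : ℝ, x < 0 → dens x = 0 := by
    intro x hx
    show ENNReal.ofReal (if 0 ≤ x then lam * Real.exp (-(lam * x)) else 0) = 0
    rw [if_neg (not_le.2 hx), ENNReal.ofReal_zero]
  -- each E i is a.s. positive
  have hEneg : ∀ i, P (E i ⁻¹' (Iio 0)) = 0 := by
    intro i
    have h1 : P (E i ⁻¹' (Iio 0)) = (Measure.map (E i) P) (Iio 0) :=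
      (Measure.map_apply (hEmeas i) measurableSet_Iio).symm
    rw [h1, hE i, withDensity_apply _ measurableSet_Iio]
    exact hzero _ measurableSet_Iio _ fun x hx => hdens0 x hx
  have hEpos : ∀ᵐ ω ∂P, ∀ i, 0 < E i ω := by
    rw [ae_all_iff]
    intro i
    have h1 : P (E i ⁻¹' (Iic 0)) = 0 := by
      have h2 : P (E i ⁻¹' (Iic 0)) = (Measure.map (E i) P) (Iic 0) :=
        (Measure.map_apply (hEmeas i) measurableSet_Iic).symm
      rw [h2, hE i, withDensity_apply _ measurableSet_Iic]
      have hsplit : Iic (0:ℝ) = Iio 0 ∪ {0} := (Iio_union_right).symm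
      rw [hsplit, lintegral_union (measurableSet_singleton 0) (by
        refine disjoint_left.2 fun x hx1 hx2 => ?_
        rw [mem_singleton_iff] at hx2
        rw [hx2] at hx1
        exact lt_irrefl 0 (mem_Iio.1 hx1))]
      have hz1 : ∫⁻ x in Iio (0:ℝ), dens x ∂volume = 0 :=
        hzero _ measurableSet_Iio _ fun x hx => hdens0 x hx
      have hz2 : ∫⁻ x in ({0} : Set ℝ), dens x ∂volume = 0 := by
        apply setLIntegral_measure_zero
        simp
      rw [hz1, hz2, add_zero]
    rw [ae_iff]
    convert h1 using 2
    ext ω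
    simp [not_lt]
  -- each Y i is a.s. ≥ -R
  have hYR : ∀ᵐ ω ∂P, ∀ i, -R ≤ Y i ω := by
    rw [ae_all_iff]
    intro i
    have h1 : P (Y i ⁻¹' (Iio (-R))) = 0 := by
      have h2 : P (Y i ⁻¹' (Iio (-R))) = (Measure.map (Y i) P) (Iio (-R)) :=
        (Measure.map_apply (hYmeas i) measurableSet_Iio).symm
      rw [h2, hY i, withDensity_apply _ measurableSet_Iio]
      exact hzero _ measurableSet_Iio _ fun z hz => by
        rw [hfYsupp z hz, ENNReal.ofReal_zero]
    rw [ae_iff]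
    convert h1 using 2
    ext ω
    simp [not_le]
  -- the law of each E i
  set ν : Measure ℝ := (volume : Measure ℝ).withDensity dens with hν
  have hνprob : IsProbabilityMeasure ν := by
    have h0 : IsProbabilityMeasure (Measure.map (E 0) P) :=
      Measure.isProbabilityMeasure_map (hEmeas 0).aemeasurable
    rw [hE 0] at h0
    exact h0
  have hdensm : Measurable dens := by
    refine ENNReal.measurable_ofReal.comp ?_
    refine Measurable.ite ?_ (measurable_const.mul (Real.measurable_exp.comp ?_)) measurable_const
    · exact measurableSet_le measurable_const measurable_id
    · exact (measurable_const.mul measurable_id).neg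
  have hq_lt_one : ∀ m : ℕ, ν (Icc (0:ℝ) m) < 1 := by
    intro m
    have hple : ν (Icc (0:ℝ) m) + ν (Ioc (m:ℝ) (m+1)) ≤ 1 := by
      rw [← measure_union (by
          refine disjoint_left.2 fun x hx1 hx2 => ?_
          exact absurd hx2.1 (not_lt.2 hx1.2)) measurableSet_Ioc]
      calc ν (Icc (0:ℝ) m ∪ Ioc (m:ℝ) (m+1)) ≤ ν univ := measure_mono (subset_univ _)
        _ = 1 := measure_univ
    have hppos : 0 < ν (Ioc (m:ℝ) (m+1)) := by
      rw [hν, withDensity_apply _ measurableSet_Ioc]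
      have hlow : ENNReal.ofReal (lam * Real.exp (-(lam * (m+1)))) * volume (Ioc (m:ℝ) (m+1))
          ≤ ∫⁻ x in Ioc (m:ℝ) (m+1), dens x ∂volume := by
        rw [← setLIntegral_const (Ioc (m:ℝ) (m+1)) (ENNReal.ofReal (lam * Real.exp (-(lam * (m+1)))))]
        refine setLIntegral_mono hdensm fun x hx => ?_
        have hx0 : (0:ℝ) ≤ x := le_of_lt (lt_of_le_of_lt (Nat.cast_nonneg m) hx.1)
        have : dens x = ENNReal.ofReal (lam * Real.exp (-(lam * x))) := by
          show ENNReal.ofReal (if 0 ≤ x then lam * Real.exp (-(lam * x)) else 0) = _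
          rw [if_pos hx0]
        rw [this]
        refine ENNReal.ofReal_le_ofReal ?_
        have he : Real.exp (-(lam * (m+1))) ≤ Real.exp (-(lam * x)) := by
          apply Real.exp_le_exp.2
          nlinarith [hx.2]
        nlinarith [Real.exp_pos (-(lam * (m+1)))]
      refine lt_of_lt_of_le ?_ hlow
      refine ENNReal.mul_pos ?_ ?_
      · refine (ENNReal.ofReal_pos.2 (by positivity)).ne'
      · rw [Real.volume_Ioc]
        refine (ENNReal.ofReal_pos.2 (by linarith)).ne'
    have hqne : ν (Icc (0:ℝ) m) ≠ ⊤ := by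
      refine ne_top_of_le_ne_top ENNReal.one_ne_top ?_
      calc ν (Icc (0:ℝ) m) ≤ ν univ := measure_mono (subset_univ _)
        _ = 1 := measure_univ
    calc ν (Icc (0:ℝ) m) < ν (Icc (0:ℝ) m) + ν (Ioc (m:ℝ) (m+1)) :=
        ENNReal.lt_add_right hqne hppos.ne'
      _ ≤ 1 := hple
  -- Borel-Cantelli: the partial sums tend to infinity a.s.
  have hτtopae : ∀ᵐ ω ∂P,
      Tendsto (fun i => ∑ j ∈ Finset.range (i + 1), E j ω) atTop atTop := by
    have hBC : ∀ m : ℕ, ∀ᵐ ω ∂P, ∀ᶠ n in atTop,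
        ¬ ((∑ j ∈ Finset.range (n+1), E j ω) ≤ (m:ℝ)) := by
      intro m
      set q : ENNReal := ν (Icc (0:ℝ) m) with hq
      have hsn : ∀ n : ℕ, P {ω | (∑ j ∈ Finset.range (n+1), E j ω) ≤ (m:ℝ)} ≤ q^(n+1) := by
        intro n
        set A : Set Ω := ⋂ j ∈ Finset.range (n+1), E j ⁻¹' (Icc (0:ℝ) m) with hA
        set B : Set Ω := ⋃ j ∈ Finset.range (n+1), E j ⁻¹' (Iio (0:ℝ)) with hB
        have hincl : {ω | (∑ j ∈ Finset.range (n+1), E j ω) ≤ (m:ℝ)} ⊆ A ∪ B := by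
          intro ω hω
          by_cases hcase : ∀ j ∈ Finset.range (n+1), 0 ≤ E j ω
          · left
            rw [hA, mem_iInter₂]
            intro j hj
            refine ⟨hcase j hj, ?_⟩
            calc E j ω ≤ ∑ j ∈ Finset.range (n+1), E j ω := Finset.single_le_sum hcase hj
              _ ≤ (m:ℝ) := hω
          · right
            push_neg at hcase
            obtain ⟨j, hj1, hj2⟩ := hcase
            rw [hB, mem_iUnion₂]
            exact ⟨j, hj1, hj2⟩
        have hPB : P B = 0 := by
          rw [hB]
          refine (measure_biUnion_null_iff (Finset.range (n+1)).countable_toSet).2 ?_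
          intro j _
          exact hEneg j
        have hPA : P A = q^(n+1) := by
          have hform := (iIndepFun_iff_measure_inter_preimage_eq_mul.1 hindep)
            ((Finset.range (n+1)).image (Sum.inl : ℕ → ℕ ⊕ ℕ))
            (sets := fun _ => Icc (0:ℝ) m) (fun _ _ => measurableSet_Icc)
          have hset : (⋂ j ∈ (Finset.range (n+1)).image (Sum.inl : ℕ → ℕ ⊕ ℕ),
              (Sum.elim E Y j) ⁻¹' (Icc (0:ℝ) m)) = A := by
            rw [hA]
            ext ω
            simp only [mem_iInter₂, Finset.mem_image, Finset.mem_range]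
            constructor
            · intro hmem j hj
              exact hmem (Sum.inl j) ⟨j, hj, rfl⟩
            · rintro hmem j ⟨i, hi, rfl⟩
              exact hmem i hi
          have hprod : (∏ j ∈ (Finset.range (n+1)).image (Sum.inl : ℕ → ℕ ⊕ ℕ),
              P ((Sum.elim E Y j) ⁻¹' (Icc (0:ℝ) m)))
              = ∏ i ∈ Finset.range (n+1), P (E i ⁻¹' (Icc (0:ℝ) m)) := by
            rw [Finset.prod_image (fun i _ j _ h => Sum.inl_injective h)]
            rfl
          have hPi : ∀ i, P (E i ⁻¹' (Icc (0:ℝ) m)) = q := by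
            intro i
            rw [← Measure.map_apply (hEmeas i) measurableSet_Icc, hE i, hq, hν]
          rw [hset, hprod] at hform
          rw [hform]
          rw [Finset.prod_congr rfl fun i _ => hPi i, Finset.prod_const, Finset.card_range]
        calc P {ω | (∑ j ∈ Finset.range (n+1), E j ω) ≤ (m:ℝ)} ≤ P (A ∪ B) :=
            measure_mono hincl
          _ ≤ P A + P B := measure_union_le _ _
          _ = q^(n+1) := by rw [hPA, hPB, add_zero]
      have hqne : q ≠ ⊤ := ((hq_lt_one m).trans_le le_top).ne
      have hsum : (∑' n : ℕ, P {ω | (∑ j ∈ Finset.range (n+1), E j ω) ≤ (m:ℝ)}) ≠ ⊤ := by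
        refine ne_top_of_le_ne_top ?_ (ENNReal.tsum_le_tsum hsn)
        have h1 : (∑' n : ℕ, q^(n+1)) = (1 - q)⁻¹ * q := by
          simp_rw [pow_succ]
          rw [ENNReal.tsum_mul_right, ENNReal.tsum_geometric]
        rw [h1]
        refine ENNReal.mul_ne_top ?_ hqne
        have hpos : 0 < 1 - q := tsub_pos_of_lt (hq_lt_one m)
        exact (ENNReal.inv_lt_top.2 hpos).ne
      exact (ae_eventually_notMem hsum).mono fun ω hω => hω
    rw [← ae_all_iff] at hBC
    refine hBC.mono fun ω hω => ?_
    rw [tendsto_atTop]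
    intro C
    have h1 := hω ⌈C⌉₊
    refine (eventually_atTop.2 ?_)
    obtain ⟨N, hN⟩ := eventually_atTop.1 h1
    refine ⟨N, fun n hn => ?_⟩
    have h2 := hN n hn
    push_neg at h2
    linarith [Nat.le_ceil C]
  filter_upwards [hEpos, hYR, hτtopae] with ω h1 h2 h3
  have hτ0 : 0 < ∑ j ∈ Finset.range (0 + 1), E j ω := by
    rw [Finset.sum_range_one]
    exact h1 0
  have hτm : StrictMono (fun i => ∑ j ∈ Finset.range (i + 1), E j ω) := by
    refine strictMono_nat_of_lt_succ fun i => ?_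
    have : ∑ j ∈ Finset.range (i + 1 + 1), E j ω
        = (∑ j ∈ Finset.range (i + 1), E j ω) + E (i+1) ω := Finset.sum_range_succ _ _
    rw [this]
    linarith [h1 (i+1)]
  obtain ⟨S, hSm, hSol, hSpos, hUniq⟩ :=
    det_solution hb hT hR hα₀ hα₁ hφm hφb' hφ0 hfm hfb' hgm hgb hτ0 hτm h3 h2
  exact ⟨S, ⟨hSm, hSol⟩, hSpos, hUniq⟩
end
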